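/- arXiv:2008.02842 — 5 statements merged into one kernel-verified Lean document; each statement's English description precedes it below -/
import Mathlib

section
/- Let u be a C³ solution of ∂²ₜu - ∂²_z u + m² u = 0 on the half-diamond D_R(I) with base I = [a,ℓ], satisfying at z = ℓ the dynamical boundary condition (β₁' ∂²ₜ - β₁) u(t,ℓ) = -β₂ ∂_z u(t,ℓ) + β₂' ∂_z ∂²ₜ u(t,ℓ). Define the boundary energy ε_ℓ(t) = (1/2)[ -(β₁/β₂) u(t,ℓ)² + ρ⁻¹( (β₁β₂'/√(-β₂β₂')) u(t,ℓ) + √(-β₂β₂') ∂_z u(t,ℓ) )² + ρ⁻¹( -β₁' ∂ₜu(t,ℓ) + β₂' ∂_z∂ₜ u(t,ℓ) )² ]. Then d/dt ε_ℓ(t) = -∂ₜu(t,ℓ) · ∂_z u(t,ℓ). -/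
open Set

private lemma aux_pd1 {g : ℝ × ℝ → ℝ} {t z : ℝ} (hg : DifferentiableAt ℝ g (t, z)) :
    HasDerivAt (fun s => g (s, z)) (fderiv ℝ g (t, z) (1, 0)) t := by
  have hc : HasDerivAt (fun s : ℝ => (s, z)) ((1 : ℝ), (0 : ℝ)) t :=
    (hasDerivAt_id t).prodMk (hasDerivAt_const t z)
  exact hg.hasFDerivAt.comp_hasDerivAt t hc

private lemma aux_pd2 {g : ℝ × ℝ → ℝ} {t z : ℝ} (hg : DifferentiableAt ℝ g (t, z)) :
    HasDerivAt (fun z' => g (t, z')) (fderiv ℝ g (t, z) (0, 1)) z := by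
  have hc : HasDerivAt (fun z' : ℝ => (t, z')) ((0 : ℝ), (1 : ℝ)) z :=
    (hasDerivAt_const z t).prodMk (hasDerivAt_id z)
  exact hg.hasFDerivAt.comp_hasDerivAt z hc

private lemma aux_cd {g : ℝ × ℝ → ℝ} {n : ℕ} (hg : ContDiff ℝ (n + 1) g) (v : ℝ × ℝ) :
    ContDiff ℝ n (fun p => fderiv ℝ g p v) :=
  (ContinuousLinearMap.apply ℝ ℝ v).contDiff.comp (hg.fderiv_right (by norm_cast))

private lemma aux_comm {g : ℝ × ℝ → ℝ} {p : ℝ × ℝ}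
    (hg : DifferentiableAt ℝ (fderiv ℝ g) p) (v w : ℝ × ℝ) :
    fderiv ℝ (fun q => fderiv ℝ g q v) p w = fderiv ℝ (fderiv ℝ g) p w v := by
  have h := ((ContinuousLinearMap.apply ℝ ℝ v).hasFDerivAt.comp p hg.hasFDerivAt).fderiv
  rw [show (fun q => (fderiv ℝ g q) v) = ((ContinuousLinearMap.apply ℝ ℝ v) ∘ fderiv ℝ g)
    from rfl, h]
  rfl

private lemma aux_sym {g : ℝ × ℝ → ℝ} (hg : ContDiff ℝ 2 g) (p v w : ℝ × ℝ) :
    fderiv ℝ (fderiv ℝ g) p v w = fderiv ℝ (fderiv ℝ g) p w v :=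
  second_derivative_symmetric
    (fun y => ((hg.differentiable (by norm_num)) y).hasFDerivAt)
    (((hg.fderiv_right (m := 1) (by norm_cast)).differentiable one_ne_zero p).hasFDerivAt) v w

private lemma aux_alg (β₁ β₂ β₁' β₂' sq V W P Q B T : ℝ) (hβ₂ : β₂ ≠ 0) (hsq0 : sq ≠ 0)
    (hρ0 : β₁'*β₂ - β₁*β₂' ≠ 0) (hsq : sq^2 = -(β₂*β₂'))
    (hbct : β₁'*B - β₁*V = -β₂*W + β₂'*T) :
    -(P*W) = 1/2 * (-(β₁/β₂) * (2*V^1*P)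
      + (β₁'*β₂-β₁*β₂')⁻¹ * (2*((β₁*β₂'/sq)*V + sq*W)^1*((β₁*β₂'/sq)*P + sq*Q))
      + (β₁'*β₂-β₁*β₂')⁻¹ * (2*(-β₁'*P + β₂'*Q)^1*(-β₁'*B + β₂'*T))) := by
  have hT : -β₁'*B + β₂'*T = -β₁*V + β₂*W := by linarith
  rw [hT]
  have hβ₂' : β₂' ≠ 0 := by
    rintro rfl; apply hsq0; simpa using hsq
  have h1' : (β₁*β₂'/sq)^2 = -(β₁*β₂')*(β₁/β₂) := by
    rw [div_pow, hsq]; field_simp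
  have h2 : sq*(β₁*β₂'/sq) = β₁*β₂' := mul_div_cancel₀ _ hsq0
  have h3 : β₁/β₂*β₂ = β₁ := div_mul_cancel₀ _ hβ₂
  have h4 : (β₁'*β₂-β₁*β₂')⁻¹*(β₁'*β₂-β₁*β₂') = 1 := inv_mul_cancel₀ hρ0
  have key : ((β₁*β₂'/sq)*V + sq*W)*((β₁*β₂'/sq)*P + sq*Q) + (-β₁'*P + β₂'*Q)*(-β₁*V + β₂*W)
      = (β₁'*β₂-β₁*β₂') * (β₁/β₂*V*P - W*P) := by
    linear_combination (V*P)*h1' + (V*Q+W*P)*h2 + (W*Q)*hsq + (-β₁'*V*P)*h3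
  linear_combination (-(β₁'*β₂-β₁*β₂')⁻¹) * key - (β₁/β₂*V*P - W*P) * h4

/-- Time derivative of the boundary energy functional at the dynamical boundary `z = ℓ`. -/
theorem stmt2 (u : ℝ → ℝ → ℝ) (a ℓ msq β₁ β₂ β₁' β₂' : ℝ) (haℓ : a < ℓ)
    (hmsq : 0 ≤ msq) (hββ : β₂ * β₂' < 0) (hβ12 : β₁ / β₂ ≤ 0)
    (hρ : 0 < β₁' * β₂ - β₁ * β₂')
    (hu : ContDiff ℝ 3 (fun p : ℝ × ℝ => u p.1 p.2))
    (hPDE : ∀ t z : ℝ, |t| ≤ ℓ - a → a + |t| ≤ z → z ≤ ℓ →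
      deriv (fun s => deriv (fun s' => u s' z) s) t
        - deriv (deriv (u t)) z + msq * u t z = 0)
    (hbc : ∀ t : ℝ, |t| ≤ ℓ - a →
      β₁' * deriv (fun s => deriv (fun s' => u s' ℓ) s) t - β₁ * u t ℓ
        = -β₂ * deriv (u t) ℓ
          + β₂' * deriv (fun w => deriv (fun s => deriv (fun s' => u s' w) s) t) ℓ) :
    ∀ εℓ : ℝ → ℝ,
      (εℓ = fun t => (1/2) *
        ( -(β₁ / β₂) * (u t ℓ)^2
          + (β₁' * β₂ - β₁ * β₂')⁻¹ *
            ((β₁ * β₂' / Real.sqrt (-(β₂ * β₂'))) * u t ℓ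
              + Real.sqrt (-(β₂ * β₂')) * deriv (u t) ℓ)^2
          + (β₁' * β₂ - β₁ * β₂')⁻¹ *
            (-β₁' * deriv (fun s => u s ℓ) t
              + β₂' * deriv (fun w => deriv (fun s => u s w) t) ℓ)^2 )) →
      ∀ t : ℝ, |t| < ℓ - a →
        HasDerivAt εℓ (-(deriv (fun s => u s ℓ) t * deriv (u t) ℓ)) t := by
  intro εℓ hε t ht
  have hβ₂ : β₂ ≠ 0 := by
    intro h; rw [h] at hββ; simp at hββ
  have hρ0 : β₁' * β₂ - β₁ * β₂' ≠ 0 := ne_of_gt hρ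
  have hpos : (0:ℝ) < -(β₂ * β₂') := by linarith
  set sq := Real.sqrt (-(β₂ * β₂')) with hsqdef
  have hsq : sq ^ 2 = -(β₂ * β₂') := Real.sq_sqrt hpos.le
  have hsq0 : sq ≠ 0 := ne_of_gt (Real.sqrt_pos.mpr hpos)
  set F : ℝ × ℝ → ℝ := fun p => u p.1 p.2 with hFdef
  have hF3 : ContDiff ℝ 3 F := hu
  have hFd : Differentiable ℝ F := hF3.differentiable (by norm_num)
  set f₁ : ℝ × ℝ → ℝ := fun p => fderiv ℝ F p (1, 0) with hf₁def
  set f₂ : ℝ × ℝ → ℝ := fun p => fderiv ℝ F p (0, 1) with hf₂def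
  have hf₁ : ContDiff ℝ 2 f₁ := aux_cd (n := 2) (by exact_mod_cast hF3) (1, 0)
  have hf₂ : ContDiff ℝ 2 f₂ := aux_cd (n := 2) (by exact_mod_cast hF3) (0, 1)
  have hf₁d : Differentiable ℝ f₁ := hf₁.differentiable two_ne_zero
  have hf₂d : Differentiable ℝ f₂ := hf₂.differentiable two_ne_zero
  set f₁₁ : ℝ × ℝ → ℝ := fun p => fderiv ℝ f₁ p (1, 0) with hf₁₁def
  set f₁₂ : ℝ × ℝ → ℝ := fun p => fderiv ℝ f₁ p (0, 1) with hf₁₂def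
  have hf₁₁ : ContDiff ℝ 1 f₁₁ := aux_cd (n := 1) (by exact_mod_cast hf₁) (1, 0)
  have hf₁₂ : ContDiff ℝ 1 f₁₂ := aux_cd (n := 1) (by exact_mod_cast hf₁) (0, 1)
  have hf₁₁d : Differentiable ℝ f₁₁ := hf₁₁.differentiable one_ne_zero
  have hf₁₂d : Differentiable ℝ f₁₂ := hf₁₂.differentiable one_ne_zero
  -- identify the one-variable derivatives with partial derivatives
  have e1 : ∀ s z : ℝ, deriv (fun s' => u s' z) s = f₁ (s, z) := fun s z =>
    HasDerivAt.deriv (show HasDerivAt (fun s' => u s' z) (f₁ (s, z)) s from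
      aux_pd1 (hFd (s, z)))
  have e2 : ∀ s z : ℝ, deriv (u s) z = f₂ (s, z) := fun s z =>
    HasDerivAt.deriv (show HasDerivAt (u s) (f₂ (s, z)) z from aux_pd2 (hFd (s, z)))
  have e3 : ∀ s z : ℝ, deriv (fun z' => deriv (fun s' => u s' z') s) z = f₁₂ (s, z) := by
    intro s z
    have hfun : (fun z' => deriv (fun s' => u s' z') s) = fun z' => f₁ (s, z') :=
      funext fun z' => e1 s z'
    rw [hfun]
    exact HasDerivAt.deriv (show HasDerivAt (fun z' => f₁ (s, z')) (f₁₂ (s, z)) z from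
      aux_pd2 (hf₁d (s, z)))
  have e4 : ∀ s z : ℝ, deriv (fun s' => deriv (fun s'' => u s'' z) s') s = f₁₁ (s, z) := by
    intro s z
    have hfun : (fun s' => deriv (fun s'' => u s'' z) s') = fun s' => f₁ (s', z) :=
      funext fun s' => e1 s' z
    rw [hfun]
    exact HasDerivAt.deriv (show HasDerivAt (fun s' => f₁ (s', z)) (f₁₁ (s, z)) s from
      aux_pd1 (hf₁d (s, z)))
  -- symmetry of second derivatives (Clairaut)
  have hd2F : Differentiable ℝ (fderiv ℝ F) :=
    (hF3.fderiv_right (m := 2) (by norm_cast)).differentiable two_ne_zero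
  have hd2f₁ : Differentiable ℝ (fderiv ℝ f₁) :=
    (hf₁.fderiv_right (m := 1) (by norm_cast)).differentiable one_ne_zero
  have cl1 : fderiv ℝ f₂ (t, ℓ) (1, 0) = f₁₂ (t, ℓ) := by
    have c1 : fderiv ℝ f₂ (t, ℓ) (1, 0)
        = fderiv ℝ (fderiv ℝ F) (t, ℓ) (1, 0) (0, 1) := aux_comm (hd2F (t, ℓ)) (0, 1) (1, 0)
    have c2 : f₁₂ (t, ℓ) = fderiv ℝ (fderiv ℝ F) (t, ℓ) (0, 1) (1, 0) := by
      have : fderiv ℝ (fun q => fderiv ℝ F q (1, 0)) (t, ℓ) (0, 1)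
          = fderiv ℝ (fderiv ℝ F) (t, ℓ) (0, 1) (1, 0) := aux_comm (hd2F (t, ℓ)) (1, 0) (0, 1)
      exact this
    rw [c1, c2, aux_sym (hF3.of_le (by norm_num)) (t, ℓ) (1, 0) (0, 1)]
  have cl2 : fderiv ℝ f₁₂ (t, ℓ) (1, 0) = fderiv ℝ f₁₁ (t, ℓ) (0, 1) := by
    have c1 : fderiv ℝ f₁₂ (t, ℓ) (1, 0)
        = fderiv ℝ (fderiv ℝ f₁) (t, ℓ) (1, 0) (0, 1) := aux_comm (hd2f₁ (t, ℓ)) (0, 1) (1, 0)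
    have c2 : fderiv ℝ f₁₁ (t, ℓ) (0, 1)
        = fderiv ℝ (fderiv ℝ f₁) (t, ℓ) (0, 1) (1, 0) := aux_comm (hd2f₁ (t, ℓ)) (1, 0) (0, 1)
    rw [c1, c2, aux_sym hf₁ (t, ℓ) (1, 0) (0, 1)]
  -- derivatives at t of the boundary traces
  have hV : HasDerivAt (fun s => u s ℓ) (f₁ (t, ℓ)) t := aux_pd1 (hFd (t, ℓ))
  have hW : HasDerivAt (fun s => f₂ (s, ℓ)) (f₁₂ (t, ℓ)) t := by
    have := aux_pd1 (g := f₂) (hf₂d (t, ℓ))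
    rwa [cl1] at this
  have hP : HasDerivAt (fun s => f₁ (s, ℓ)) (f₁₁ (t, ℓ)) t := aux_pd1 (hf₁d (t, ℓ))
  have hQ : HasDerivAt (fun s => f₁₂ (s, ℓ)) (fderiv ℝ f₁₁ (t, ℓ) (0, 1)) t := by
    have := aux_pd1 (g := f₁₂) (hf₁₂d (t, ℓ))
    rwa [cl2] at this
  -- the boundary condition in terms of the partials
  have hbct : β₁' * f₁₁ (t, ℓ) - β₁ * u t ℓ
      = -β₂ * f₂ (t, ℓ) + β₂' * fderiv ℝ f₁₁ (t, ℓ) (0, 1) := by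
    have h := hbc t ht.le
    rw [e4 t ℓ, e2 t ℓ] at h
    have hfun : (fun w => deriv (fun s => deriv (fun s' => u s' w) s) t)
        = fun w => f₁₁ (t, w) := funext fun w => e4 t w
    rw [hfun] at h
    rwa [HasDerivAt.deriv (show HasDerivAt (fun w => f₁₁ (t, w))
      (fderiv ℝ f₁₁ (t, ℓ) (0, 1)) ℓ from aux_pd2 (hf₁₁d (t, ℓ)))] at h
  -- rewrite εℓ in terms of the partials
  have hfun : εℓ = fun s => (1/2) *
      ( -(β₁ / β₂) * (u s ℓ)^2
        + (β₁' * β₂ - β₁ * β₂')⁻¹ * ((β₁ * β₂' / sq) * u s ℓ + sq * f₂ (s, ℓ))^2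
        + (β₁' * β₂ - β₁ * β₂')⁻¹ * (-β₁' * f₁ (s, ℓ) + β₂' * f₁₂ (s, ℓ))^2 ) := by
    have e3' : ∀ s z : ℝ, deriv (fun z' => f₁ (s, z')) z = f₁₂ (s, z) := fun s z =>
      HasDerivAt.deriv (show HasDerivAt (fun z' => f₁ (s, z')) (f₁₂ (s, z)) z from
        aux_pd2 (hf₁d (s, z)))
    rw [hε]; funext s
    simp only [e1, e2, e3, e3']
  rw [hfun, e1 t ℓ, e2 t ℓ]
  -- assemble the derivative
  have h1 := (hV.pow 2).const_mul (-(β₁ / β₂))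
  have h2 := (((hV.const_mul (β₁ * β₂' / sq)).add (hW.const_mul sq)).pow 2).const_mul
    ((β₁' * β₂ - β₁ * β₂')⁻¹)
  have h3 := (((hP.const_mul (-β₁')).add (hQ.const_mul β₂')).pow 2).const_mul
    ((β₁' * β₂ - β₁ * β₂')⁻¹)
  have key := ((h1.add h2).add h3).const_mul (1/2 : ℝ)
  refine key.congr_deriv ?_
  push_cast
  exact (aux_alg β₁ β₂ β₁' β₂' sq (u t ℓ) (f₂ (t, ℓ)) (f₁ (t, ℓ)) (f₁₂ (t, ℓ))
    (f₁₁ (t, ℓ)) (fderiv ℝ f₁₁ (t, ℓ) (0, 1)) hβ₂ hsq0 hρ0 hsq hbct).symm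
end

section
/- Let u be a sufficiently smooth solution of ∂²ₜu - ∂²_z u + m² u = 0 on [0, T] × [a, ℓ] satisfying the dynamical boundary condition (β₁' ∂²ₜ - β₁) u(t,ℓ) = -β₂ ∂_z u(t,ℓ) + β₂' ∂_z ∂²ₜ u(t,ℓ) at z = ℓ. Let ε(t) be the sum of the bulk energy (1/2)∫_{a+t}^{ℓ} ((∂ₜu)² + (∂_z u)² + m² u²) dz and the boundary energy ε_ℓ(t) of the previous statement. Then ε is non-increasing in t. Consequently, if u and ∂ₜu vanish at t = 0 on [a,ℓ], then u vanishes identically on the future half-diamond {(t,z) : 0 ≤ t ≤ ℓ - a, a + t ≤ z ≤ ℓ}. -/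
open Set MeasureTheory intervalIntegral

lemma moving_hasDerivAt (f ft : ℝ → ℝ → ℝ)
    (hf : Continuous fun p : ℝ × ℝ => f p.1 p.2)
    (hft : Continuous fun p : ℝ × ℝ => ft p.1 p.2)
    (hd : ∀ s z : ℝ, HasDerivAt (fun s' => f s' z) (ft s z) s)
    (a ℓ t₀ : ℝ) :
    HasDerivAt (fun t => ∫ z in (a + t)..ℓ, f t z)
      ((∫ z in (a + t₀)..ℓ, ft t₀ z) - f t₀ (a + t₀)) t₀ := by
  have hfz : ∀ t : ℝ, Continuous (f t) := fun t => hf.comp (Continuous.prodMk_right t)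
  have hftz : ∀ t : ℝ, Continuous (ft t) := fun t => hft.comp (Continuous.prodMk_right t)
  have key : ∀ t : ℝ, (∫ z in (a + t)..ℓ, f t z)
      = (∫ z in (a + t₀)..ℓ, f t z) - ∫ z in (a + t₀)..(a + t), f t z := by
    intro t
    have := integral_add_adjacent_intervals (μ := volume)
      ((hfz t).intervalIntegrable (a + t₀) (a + t)) ((hfz t).intervalIntegrable (a + t) ℓ)
    linarith
  have hΦ : HasDerivAt (fun t => ∫ z in (a + t₀)..ℓ, f t z)
      (∫ z in (a + t₀)..ℓ, ft t₀ z) t₀ := by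
    obtain ⟨C, hC⟩ := ((isCompact_Icc (a := t₀ - 1) (b := t₀ + 1)).prod
      (isCompact_uIcc (a := a + t₀) (b := ℓ))).exists_bound_of_continuousOn hft.continuousOn
    refine (hasDerivAt_integral_of_dominated_loc_of_deriv_le (F := f) (F' := ft)
      (bound := fun _ => C) (Metric.ball_mem_nhds t₀ one_pos) ?_ ((hfz t₀).intervalIntegrable _ _)
      ((hftz t₀).aestronglyMeasurable) ?_ (intervalIntegrable_const) ?_).2
    · exact Filter.Eventually.of_forall fun x => (hfz x).aestronglyMeasurable
    · refine Filter.Eventually.of_forall fun z hz x hx => ?_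
      have : ((x, z) : ℝ × ℝ) ∈ Icc (t₀ - 1) (t₀ + 1) ×ˢ uIcc (a + t₀) ℓ := by
        constructor
        · have := Metric.mem_ball.1 hx
          rw [Real.dist_eq] at this
          constructor <;> [linarith [abs_lt.1 this]; linarith [(abs_lt.1 this).2]]
        · exact uIoc_subset_uIcc hz
      simpa using hC _ this
    · exact Filter.Eventually.of_forall fun z _ x _ => hd x z
  have hθ : HasDerivAt (fun t => ∫ z in (a + t₀)..(a + t), f t z) (f t₀ (a + t₀)) t₀ := by
    rw [hasDerivAt_iff_isLittleO]
    rw [Asymptotics.isLittleO_iff]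
    intro c hc
    obtain ⟨δ, hδ, hball⟩ := Metric.continuousAt_iff.1 (hf.continuousAt
      (x := ((t₀, a + t₀) : ℝ × ℝ))) c hc
    have hev : ∀ᶠ t in nhds t₀, |t - t₀| < δ / 2 := by
      have : Metric.ball t₀ (δ / 2) ∈ nhds t₀ := Metric.ball_mem_nhds _ (by linarith)
      filter_upwards [this] with t ht
      simpa [Real.dist_eq] using ht
    filter_upwards [hev] with t ht
    have hint1 : IntervalIntegrable (f t) volume (a + t₀) (a + t) :=
      (hfz t).intervalIntegrable _ _
    have hsub : (∫ z in (a + t₀)..(a + t), f t z) - (∫ z in (a+t₀)..(a+t₀), f t₀ z)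
        - (t - t₀) • f t₀ (a + t₀)
        = ∫ z in (a + t₀)..(a + t), (f t z - f t₀ (a + t₀)) := by
      rw [intervalIntegral.integral_sub hint1 (intervalIntegrable_const)]
      simp [intervalIntegral.integral_const]
      try ring
    rw [hsub]
    have hbd : ∀ z ∈ Set.uIoc (a + t₀) (a + t), ‖f t z - f t₀ (a + t₀)‖ ≤ c := by
      intro z hz
      have hz' : |z - (a + t₀)| ≤ |t - t₀| := by
        rcases Set.mem_uIoc.1 hz with h | h <;>
          exact abs_le.2 ⟨by linarith [neg_abs_le (t - t₀), abs_nonneg (t - t₀), h.1, h.2],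
            by linarith [le_abs_self (t - t₀), abs_nonneg (t - t₀), h.1, h.2]⟩
      have : dist ((t, z) : ℝ × ℝ) ((t₀, a + t₀) : ℝ × ℝ) < δ := by
        rw [Prod.dist_eq]
        simp only [Real.dist_eq]
        apply max_lt (by linarith) (by linarith [le_trans hz' (le_of_lt ht)])
      exact le_of_lt (by simpa [Real.dist_eq] using hball this)
    calc ‖∫ z in (a + t₀)..(a + t), (f t z - f t₀ (a + t₀))‖
        ≤ c * |(a + t) - (a + t₀)| := intervalIntegral.norm_integral_le_of_norm_le_const hbd
      _ = c * ‖t - t₀‖ := by rw [Real.norm_eq_abs]; ring_nf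
  have : (fun t => ∫ z in (a + t)..ℓ, f t z)
      = fun t => (∫ z in (a + t₀)..ℓ, f t z) - ∫ z in (a + t₀)..(a + t), f t z :=
    funext key
  rw [this]
  exact hΦ.sub hθ

lemma bdry_algebra (β₁ β₂ β₁' β₂' s U V W Z : ℝ)
    (hs2 : s ^ 2 = -(β₂ * β₂')) (hs0 : s ≠ 0) (hβ₂ : β₂ ≠ 0)
    (hρ : β₁' * β₂ - β₁ * β₂' ≠ 0) :
    (1/2) * ( -(β₁/β₂) * (2 * U * V)
      + (β₁' * β₂ - β₁ * β₂')⁻¹ * (2 * ((β₁ * β₂'/s) * U + s * W) * ((β₁ * β₂'/s) * V + s * Z))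
      + (β₁' * β₂ - β₁ * β₂')⁻¹ * (2 * (-β₁' * V + β₂' * Z) * (-β₁ * U + β₂ * W)) )
    = -(V * W) := by
  have h1 : (β₁ * β₂'/s) * U + s * W = (β₁ * β₂' * U - β₂ * β₂' * W)/s := by
    field_simp
    linear_combination W * hs2
  have h2 : (β₁ * β₂'/s) * V + s * Z = (β₁ * β₂' * V - β₂ * β₂' * Z)/s := by
    field_simp
    linear_combination Z * hs2
  have hββ : β₂ * β₂' ≠ 0 := by
    intro h; apply hs0; have : s ^ 2 = 0 := by rw [hs2, h, neg_zero]
    exact pow_eq_zero_iff (n := 2) (by norm_num) |>.1 this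
  have hβ₂' : β₂' ≠ 0 := fun h => hββ (by rw [h, mul_zero])
  have h3 : 2 * ((β₁ * β₂' * U - β₂ * β₂' * W)/s) * ((β₁ * β₂' * V - β₂ * β₂' * Z)/s)
      = 2 * (((β₁ * β₂' * U - β₂ * β₂' * W) * (β₁ * β₂' * V - β₂ * β₂' * Z)) / (-(β₂ * β₂'))) := by
    rw [← hs2]; field_simp
  rw [h1, h2, h3]
  field_simp
  have : β₂ * β₁' - β₁ * β₂' ≠ 0 := by contrapose! hρ; linarith
  field_simp
  ring

lemma zero_of_integral_zero (g : ℝ → ℝ) (hg : Continuous g) (hnn : ∀ x, 0 ≤ g x)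
    (c d : ℝ) (hcd : c < d) (hint : (∫ x in c..d, g x) = 0) :
    ∀ x ∈ Set.Icc c d, g x = 0 := by
  by_contra hcon
  push_neg at hcon
  obtain ⟨x₀, hx₀, hgx₀⟩ := hcon
  have hpos : 0 < g x₀ := lt_of_le_of_ne (hnn x₀) (Ne.symm hgx₀)
  have hopen : IsOpen {x : ℝ | 0 < g x} := isOpen_lt continuous_const hg
  obtain ⟨r, hr, hball⟩ := Metric.isOpen_iff.1 hopen x₀ hpos
  set lo := max (x₀ - r) c with hlo
  set hi := min (x₀ + r) d with hhi
  have hlohi : lo < hi := by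
    apply max_lt <;> apply lt_min <;> first
      | linarith [hx₀.1, hx₀.2]
      | linarith [hx₀.1, hx₀.2, hr]
  have hsub : Ioo lo hi ⊆ Function.support g ∩ Ioc c d := by
    intro y hy
    have h1 : y ∈ Metric.ball x₀ r := by
      rw [Metric.mem_ball, Real.dist_eq, abs_lt]
      constructor <;>
        [linarith [hy.1, le_max_left (x₀ - r) c]; linarith [hy.2, min_le_left (x₀ + r) d]]
    refine ⟨ne_of_gt (hball h1), ?_, ?_⟩
    · linarith [hy.1, le_max_right (x₀ - r) c]
    · linarith [hy.2, min_le_right (x₀ + r) d]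
  have hvol : 0 < volume (Function.support g ∩ Ioc c d) := by
    refine lt_of_lt_of_le ?_ (measure_mono hsub)
    rw [Real.volume_Ioo]
    exact ENNReal.ofReal_pos.2 (by linarith)
  have := (intervalIntegral.integral_pos_iff_support_of_nonneg_ae
    (Filter.Eventually.of_forall hnn) (hg.intervalIntegrable c d)).2 ⟨hcd, hvol⟩
  linarith

set_option maxHeartbeats 1000000 in
/-- The total (bulk + boundary) energy on the right half-diamond is non-increasing;
consequently vanishing Cauchy data forces the solution to vanish on the future
half-diamond. -/
theorem stmt3 (u : ℝ → ℝ → ℝ) (a ℓ T msq β₁ β₂ β₁' β₂' : ℝ) (haℓ : a < ℓ)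
    (hT : ℓ - a ≤ T) (hmsq : 0 ≤ msq) (hββ : β₂ * β₂' < 0) (hβ12 : β₁ / β₂ ≤ 0)
    (hρ : 0 < β₁' * β₂ - β₁ * β₂')
    (hu : ContDiff ℝ 3 (fun p : ℝ × ℝ => u p.1 p.2))
    (hPDE : ∀ t ∈ Icc (0:ℝ) T, ∀ z ∈ Icc a ℓ,
      deriv (fun s => deriv (fun s' => u s' z) s) t
        - deriv (deriv (u t)) z + msq * u t z = 0)
    (hbc : ∀ t ∈ Icc (0:ℝ) T,
      β₁' * deriv (fun s => deriv (fun s' => u s' ℓ) s) t - β₁ * u t ℓ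
        = -β₂ * deriv (u t) ℓ
          + β₂' * deriv (fun w => deriv (fun s => deriv (fun s' => u s' w) s) t) ℓ) :
    ∀ ε : ℝ → ℝ,
      (ε = fun t =>
        (1/2) * (∫ z in (a + t)..ℓ,
          ((deriv (fun s => u s z) t)^2 + (deriv (u t) z)^2 + msq * (u t z)^2))
        + (1/2) *
          ( -(β₁ / β₂) * (u t ℓ)^2
            + (β₁' * β₂ - β₁ * β₂')⁻¹ *
              ((β₁ * β₂' / Real.sqrt (-(β₂ * β₂'))) * u t ℓ
                + Real.sqrt (-(β₂ * β₂')) * deriv (u t) ℓ)^2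
            + (β₁' * β₂ - β₁ * β₂')⁻¹ *
              (-β₁' * deriv (fun s => u s ℓ) t
                + β₂' * deriv (fun w => deriv (fun s => u s w) t) ℓ)^2 )) →
      AntitoneOn ε (Icc (0:ℝ) (ℓ - a)) ∧
      ((∀ z ∈ Icc a ℓ, u 0 z = 0 ∧ deriv (fun s => u s z) 0 = 0) →
        ∀ t z : ℝ, 0 ≤ t → t ≤ ℓ - a → a + t ≤ z → z ≤ ℓ → u t z = 0) := by
  intro ε hε
  -- basic sign facts
  have hβ₂ : β₂ ≠ 0 := by intro h; rw [h, zero_mul] at hββ; linarith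
  have hρ0 : (β₁' * β₂ - β₁ * β₂') ≠ 0 := ne_of_gt hρ
  have hs2 : Real.sqrt (-(β₂ * β₂')) ^ 2 = -(β₂ * β₂') := Real.sq_sqrt (by linarith)
  have hs0 : Real.sqrt (-(β₂ * β₂')) ≠ 0 := ne_of_gt (Real.sqrt_pos.2 (by linarith))
  -- calculus setup
  set F : ℝ × ℝ → ℝ := fun p : ℝ × ℝ => u p.1 p.2 with hFdef
  set G := fderiv ℝ F with hGdef
  set Hh := fderiv ℝ G with hHdef
  set K := fderiv ℝ Hh with hKdef
  have hG : ContDiff ℝ 2 G := hu.fderiv_right (by norm_num)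
  have hH : ContDiff ℝ 1 Hh := hG.fderiv_right (by norm_num)
  have hud : Differentiable ℝ F := hu.differentiable (by norm_num)
  have hGd : Differentiable ℝ G := hG.differentiable (by norm_num)
  have hHd : Differentiable ℝ Hh := hH.differentiable (by norm_num)
  have cF : Continuous F := hu.continuous
  have cG : Continuous G := hG.continuous
  have cH : Continuous Hh := hH.continuous
  have lineT : ∀ (t z : ℝ), HasDerivAt (fun s : ℝ => ((s, z) : ℝ × ℝ)) ((1:ℝ), (0:ℝ)) t :=
    fun t z => (hasDerivAt_id t).prodMk (hasDerivAt_const t z)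
  have lineZ : ∀ (t z : ℝ), HasDerivAt (fun z' : ℝ => ((t, z') : ℝ × ℝ)) ((0:ℝ), (1:ℝ)) z :=
    fun t z => (hasDerivAt_const z t).prodMk (hasDerivAt_id z)
  have hvt : ∀ t z : ℝ, HasDerivAt (fun s => u s z) (G (t, z) (1, 0)) t :=
    fun t z => (hud (t, z)).hasFDerivAt.comp_hasDerivAt (l := F) t (lineT t z)
  have hwz : ∀ t z : ℝ, HasDerivAt (fun z' => u t z') (G (t, z) (0, 1)) z :=
    fun t z => (hud (t, z)).hasFDerivAt.comp_hasDerivAt (l := F) z (lineZ t z)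
  have hGt : ∀ (t z : ℝ) (e : ℝ × ℝ), HasDerivAt (fun s => G (s, z) e) (Hh (t, z) (1, 0) e) t := by
    intro t z e
    have h1 : HasDerivAt (fun s => G (s, z)) (Hh (t, z) (1, 0)) t :=
      (hGd (t, z)).hasFDerivAt.comp_hasDerivAt t (lineT t z)
    simpa using h1.clm_apply (hasDerivAt_const t e)
  have hGz : ∀ (t z : ℝ) (e : ℝ × ℝ), HasDerivAt (fun z' => G (t, z') e) (Hh (t, z) (0, 1) e) z := by
    intro t z e
    have h1 : HasDerivAt (fun z' => G (t, z')) (Hh (t, z) (0, 1)) z :=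
      (hGd (t, z)).hasFDerivAt.comp_hasDerivAt z (lineZ t z)
    simpa using h1.clm_apply (hasDerivAt_const z e)
  have hHt : ∀ (t z : ℝ) (e₁ e₂ : ℝ × ℝ),
      HasDerivAt (fun s => Hh (s, z) e₁ e₂) (K (t, z) (1, 0) e₁ e₂) t := by
    intro t z e₁ e₂
    have h1 : HasDerivAt (fun s => Hh (s, z)) (K (t, z) (1, 0)) t :=
      (hHd (t, z)).hasFDerivAt.comp_hasDerivAt (l := Hh) t (lineT t z)
    have h2 := h1.clm_apply (hasDerivAt_const t e₁)
    simpa using h2.clm_apply (hasDerivAt_const t e₂)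
  have hHz : ∀ (t z : ℝ) (e₁ e₂ : ℝ × ℝ),
      HasDerivAt (fun z' => Hh (t, z') e₁ e₂) (K (t, z) (0, 1) e₁ e₂) z := by
    intro t z e₁ e₂
    have h1 : HasDerivAt (fun z' => Hh (t, z')) (K (t, z) (0, 1)) z :=
      (hHd (t, z)).hasFDerivAt.comp_hasDerivAt (l := Hh) z (lineZ t z)
    have h2 := h1.clm_apply (hasDerivAt_const z e₁)
    simpa using h2.clm_apply (hasDerivAt_const z e₂)
  have symm2 : ∀ (p : ℝ × ℝ) (e₁ e₂ : ℝ × ℝ), Hh p e₁ e₂ = Hh p e₂ e₁ := by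
    intro p e₁ e₂
    exact (hu.contDiffAt.isSymmSndFDerivAt (by norm_num)) e₁ e₂
  have symm3 : ∀ (p : ℝ × ℝ) (e₁ e₂ e₃ : ℝ × ℝ), K p e₁ e₂ e₃ = K p e₂ e₁ e₃ := by
    intro p e₁ e₂ e₃
    have := ((hG.contDiffAt (x := p)).isSymmSndFDerivAt (by norm_num)) e₁ e₂
    rw [hKdef, hHdef]
    exact congrFun (congrArg _ this) e₃
  -- deriv identities
  have dt1 : ∀ t z : ℝ, deriv (fun s => u s z) t = G (t, z) (1, 0) := fun t z => (hvt t z).deriv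
  have dz1 : ∀ t z : ℝ, deriv (u t) z = G (t, z) (0, 1) := fun t z => (hwz t z).deriv
  have dt2 : ∀ t z : ℝ, deriv (fun s => deriv (fun s' => u s' z) s) t = Hh (t, z) (1, 0) (1, 0) := by
    intro t z
    have h : (fun s => deriv (fun s' => u s' z) s) = fun s => G (s, z) (1, 0) :=
      funext fun s => (hvt s z).deriv
    rw [h]; exact (hGt t z (1, 0)).deriv
  have dzz : ∀ t z : ℝ, deriv (deriv (u t)) z = Hh (t, z) (0, 1) (0, 1) := by
    intro t z
    have h : deriv (u t) = fun z' => G (t, z') (0, 1) := funext fun z' => (hwz t z').deriv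
    rw [h]; exact (hGz t z (0, 1)).deriv
  have dzt' : ∀ t z : ℝ, deriv (fun w => G (t, w) (1, 0)) z = Hh (t, z) (0, 1) (1, 0) :=
    fun t z => (hGz t z (1, 0)).deriv
  have dq : ∀ t z : ℝ,
      deriv (fun w => deriv (fun s => deriv (fun s' => u s' w) s) t) z
        = K (t, z) (0, 1) (1, 0) (1, 0) := by
    intro t z
    have h : (fun w => deriv (fun s => deriv (fun s' => u s' w) s) t)
        = fun w => Hh (t, w) (1, 0) (1, 0) := funext fun w' => dt2 t w'
    rw [h]; exact (hHz t z (1, 0) (1, 0)).deriv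
  -- PDE and BC in fderiv language
  have hPDE' : ∀ t ∈ Icc (0:ℝ) T, ∀ z ∈ Icc a ℓ,
      Hh (t, z) (1, 0) (1, 0) = Hh (t, z) (0, 1) (0, 1) - msq * u t z := by
    intro t ht z hz
    have := hPDE t ht z hz
    rw [dt2, dzz] at this
    linarith
  have hbc' : ∀ t ∈ Icc (0:ℝ) T,
      β₁' * Hh (t, ℓ) (1, 0) (1, 0) - β₁ * u t ℓ
        = -β₂ * G (t, ℓ) (0, 1) + β₂' * K (t, ℓ) (0, 1) (1, 0) (1, 0) := by
    intro t ht
    have := hbc t ht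
    rw [dt2, dz1, dq] at this
    exact this
  -- continuity helpers
  have cGe : ∀ e : ℝ × ℝ, Continuous fun p : ℝ × ℝ => G p e :=
    fun e => cG.clm_apply continuous_const
  have cHe : ∀ e₁ e₂ : ℝ × ℝ, Continuous fun p : ℝ × ℝ => Hh p e₁ e₂ :=
    fun e₁ e₂ => (cH.clm_apply continuous_const).clm_apply continuous_const
  -- the rewritten energy
  have hε2 : ε = fun t =>
      (1/2) * (∫ z in (a + t)..ℓ,
        ((G (t, z) (1, 0))^2 + (G (t, z) (0, 1))^2 + msq * (u t z)^2))
      + (1/2) *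
        ( -(β₁ / β₂) * (u t ℓ)^2
          + (β₁' * β₂ - β₁ * β₂')⁻¹ *
            ((β₁ * β₂' / Real.sqrt (-(β₂ * β₂'))) * u t ℓ
              + Real.sqrt (-(β₂ * β₂')) * G (t, ℓ) (0, 1))^2
          + (β₁' * β₂ - β₁ * β₂')⁻¹ *
            (-β₁' * G (t, ℓ) (1, 0) + β₂' * Hh (t, ℓ) (0, 1) (1, 0))^2 ) := by
    rw [hε]
    funext t
    simp only [dt1, dz1, dzt']
  -- derivative of the energy
  have hEd : ∀ t : ℝ, HasDerivAt ε (
      (1/2) * ((∫ z in (a + t)..ℓ,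
          (2 * G (t, z) (1, 0) * Hh (t, z) (1, 0) (1, 0)
            + 2 * G (t, z) (0, 1) * Hh (t, z) (1, 0) (0, 1)
            + msq * (2 * u t z * G (t, z) (1, 0))))
        - ((G (t, a + t) (1, 0))^2 + (G (t, a + t) (0, 1))^2 + msq * (u t (a + t))^2))
      + (1/2) * ( -(β₁ / β₂) * (2 * u t ℓ * G (t, ℓ) (1, 0))
          + (β₁' * β₂ - β₁ * β₂')⁻¹ *
            (2 * ((β₁ * β₂' / Real.sqrt (-(β₂ * β₂'))) * u t ℓ
                + Real.sqrt (-(β₂ * β₂')) * G (t, ℓ) (0, 1))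
              * ((β₁ * β₂' / Real.sqrt (-(β₂ * β₂'))) * G (t, ℓ) (1, 0)
                + Real.sqrt (-(β₂ * β₂')) * Hh (t, ℓ) (1, 0) (0, 1)))
          + (β₁' * β₂ - β₁ * β₂')⁻¹ *
            (2 * (-β₁' * G (t, ℓ) (1, 0) + β₂' * Hh (t, ℓ) (0, 1) (1, 0))
              * (-β₁' * Hh (t, ℓ) (1, 0) (1, 0) + β₂' * K (t, ℓ) (1, 0) (0, 1) (1, 0))))) t := by
    intro t
    rw [hε2]
    have cf : Continuous fun p : ℝ × ℝ =>
        (G (p.1, p.2) (1, 0))^2 + (G (p.1, p.2) (0, 1))^2 + msq * (u p.1 p.2)^2 := by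
      exact (((cGe (1,0)).pow 2).add ((cGe (0,1)).pow 2)).add (continuous_const.mul (cF.pow 2))
    have cft : Continuous fun p : ℝ × ℝ =>
        2 * G (p.1, p.2) (1, 0) * Hh (p.1, p.2) (1, 0) (1, 0)
          + 2 * G (p.1, p.2) (0, 1) * Hh (p.1, p.2) (1, 0) (0, 1)
          + msq * (2 * u p.1 p.2 * G (p.1, p.2) (1, 0)) := by
      exact (((continuous_const.mul (cGe (1,0))).mul (cHe (1,0) (1,0))).add
        ((continuous_const.mul (cGe (0,1))).mul (cHe (1,0) (0,1)))).add
        (continuous_const.mul ((continuous_const.mul cF).mul (cGe (1,0))))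
    have hfd : ∀ s z : ℝ, HasDerivAt
        (fun s' => (G (s', z) (1, 0))^2 + (G (s', z) (0, 1))^2 + msq * (u s' z)^2)
        (2 * G (s, z) (1, 0) * Hh (s, z) (1, 0) (1, 0)
          + 2 * G (s, z) (0, 1) * Hh (s, z) (1, 0) (0, 1)
          + msq * (2 * u s z * G (s, z) (1, 0))) s := by
      intro s z
      have h1 := (hGt s z (1, 0)).pow 2
      have h2 := (hGt s z (0, 1)).pow 2
      have h3 := ((hvt s z).pow 2).const_mul msq
      have := (h1.add h2).add h3
      refine this.congr_deriv ?_
      push_cast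
      ring
    have hbulk := moving_hasDerivAt
      (fun t z => (G (t, z) (1, 0))^2 + (G (t, z) (0, 1))^2 + msq * (u t z)^2)
      (fun t z => 2 * G (t, z) (1, 0) * Hh (t, z) (1, 0) (1, 0)
          + 2 * G (t, z) (0, 1) * Hh (t, z) (1, 0) (0, 1)
          + msq * (2 * u t z * G (t, z) (1, 0)))
      cf cft hfd a ℓ t
    have hU := hvt t ℓ
    have hW := hGt t ℓ (0, 1)
    have hV := hGt t ℓ (1, 0)
    have hZ := hHt t ℓ (0, 1) (1, 0)
    have term1 := (hU.pow 2).const_mul (-(β₁ / β₂))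
    have term2 := (((hU.const_mul (β₁ * β₂' / Real.sqrt (-(β₂ * β₂')))).add
      (hW.const_mul (Real.sqrt (-(β₂ * β₂'))))).pow 2).const_mul (β₁' * β₂ - β₁ * β₂')⁻¹
    have term3 := (((hV.const_mul (-β₁')).add (hZ.const_mul β₂')).pow 2).const_mul
      (β₁' * β₂ - β₁ * β₂')⁻¹
    have hB := (term1.add term2).add term3
    have := (hbulk.const_mul ((1:ℝ)/2)).add (hB.const_mul ((1:ℝ)/2))
    refine this.congr_deriv ?_
    simp only [Pi.add_apply]
    push_cast
    ring
  -- nonpositivity of the derivative on the relevant interval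
  have hDle : ∀ t : ℝ, 0 < t → t < ℓ - a → deriv ε t ≤ 0 := by
    intro t ht0 ht1
    rw [(hEd t).deriv]
    have htT : t ∈ Icc (0:ℝ) T := ⟨le_of_lt ht0, by linarith⟩
    -- evaluate the bulk integral
    have hint : (∫ z in (a + t)..ℓ,
        (2 * G (t, z) (1, 0) * Hh (t, z) (1, 0) (1, 0)
          + 2 * G (t, z) (0, 1) * Hh (t, z) (1, 0) (0, 1)
          + msq * (2 * u t z * G (t, z) (1, 0))))
        = 2 * (G (t, ℓ) (1, 0) * G (t, ℓ) (0, 1))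
          - 2 * (G (t, a + t) (1, 0) * G (t, a + t) (0, 1)) := by
      have heq : EqOn
          (fun z => 2 * G (t, z) (1, 0) * Hh (t, z) (1, 0) (1, 0)
            + 2 * G (t, z) (0, 1) * Hh (t, z) (1, 0) (0, 1)
            + msq * (2 * u t z * G (t, z) (1, 0)))
          (fun z => 2 * (Hh (t, z) (0, 1) (1, 0) * G (t, z) (0, 1)
            + G (t, z) (1, 0) * Hh (t, z) (0, 1) (0, 1)))
          (uIcc (a + t) ℓ) := by
        intro z hz
        rw [uIcc_of_le (by linarith)] at hz
        have hz' : z ∈ Icc a ℓ := ⟨by linarith [hz.1], hz.2⟩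
        have hp := hPDE' t htT z hz'
        have hsym := symm2 (t, z) (1, 0) (0, 1)
        simp only
        rw [hp, hsym]
        ring
      rw [intervalIntegral.integral_congr heq]
      have hder : ∀ z ∈ uIcc (a + t) ℓ,
          HasDerivAt (fun z' => 2 * (G (t, z') (1, 0) * G (t, z') (0, 1)))
            (2 * (Hh (t, z) (0, 1) (1, 0) * G (t, z) (0, 1)
              + G (t, z) (1, 0) * Hh (t, z) (0, 1) (0, 1))) z :=
        fun z _ => ((hGz t z (1, 0)).mul (hGz t z (0, 1))).const_mul 2
      have hintg : IntervalIntegrable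
          (fun z => 2 * (Hh (t, z) (0, 1) (1, 0) * G (t, z) (0, 1)
            + G (t, z) (1, 0) * Hh (t, z) (0, 1) (0, 1))) volume (a + t) ℓ := by
        apply Continuous.intervalIntegrable
        exact continuous_const.mul
          ((((cHe (0,1) (1,0)).comp (Continuous.prodMk_right t)).mul
            ((cGe (0,1)).comp (Continuous.prodMk_right t))).add
          (((cGe (1,0)).comp (Continuous.prodMk_right t)).mul
            ((cHe (0,1) (0,1)).comp (Continuous.prodMk_right t))))
      rw [intervalIntegral.integral_eq_sub_of_hasDerivAt hder hintg]
      try ring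
    rw [hint]
    have e2 : K (t, ℓ) (1, 0) (0, 1) (1, 0) = K (t, ℓ) (0, 1) (1, 0) (1, 0) :=
      symm3 (t, ℓ) (1, 0) (0, 1) (1, 0)
    have e1 : Hh (t, ℓ) (1, 0) (0, 1) = Hh (t, ℓ) (0, 1) (1, 0) := symm2 (t, ℓ) (1, 0) (0, 1)
    rw [e1, e2]
    have key : -β₁' * Hh (t, ℓ) (1, 0) (1, 0) + β₂' * K (t, ℓ) (0, 1) (1, 0) (1, 0)
        = -β₁ * u t ℓ + β₂ * G (t, ℓ) (0, 1) := by
      have := hbc' t htT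
      linarith
    rw [key]
    have halg := bdry_algebra β₁ β₂ β₁' β₂' (Real.sqrt (-(β₂ * β₂'))) (u t ℓ)
      (G (t, ℓ) (1, 0)) (G (t, ℓ) (0, 1)) (Hh (t, ℓ) (0, 1) (1, 0)) hs2 hs0 hβ₂ hρ0
    have hexp : ((G (t, a+t) (1, 0)) + (G (t, a+t) (0, 1)))^2
        = (G (t, a+t) (1, 0))^2 + 2 * (G (t, a+t) (1, 0) * G (t, a+t) (0, 1))
          + (G (t, a+t) (0, 1))^2 := by ring
    rw [halg]
    linarith [sq_nonneg ((G (t, a+t) (1, 0)) + (G (t, a+t) (0, 1))), hexp,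
      mul_nonneg hmsq (sq_nonneg (u t (a+t)))]
  have hAnti : AntitoneOn ε (Icc (0:ℝ) (ℓ - a)) := by
    apply antitoneOn_of_deriv_nonpos (convex_Icc _ _)
    · exact (continuous_iff_continuousAt.2 fun t => (hEd t).continuousAt).continuousOn
    · exact fun t _ => ((hEd t).differentiableAt.differentiableWithinAt)
    · intro t ht
      rw [interior_Icc] at ht
      exact hDle t ht.1 ht.2
  refine ⟨hAnti, ?_⟩
  intro hdata t z ht0 ht1 hz1 hz2
  have hv00 : ∀ y ∈ Icc a ℓ, G (0, y) (1, 0) = 0 := by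
    intro y hy
    have := (hdata y hy).2
    rw [dt1] at this
    exact this
  have hw0 : ∀ y ∈ Icc a ℓ, G (0, y) (0, 1) = 0 := by
    have hIoo : EqOn (fun y => G (0, y) (0, 1)) (fun _ => (0:ℝ)) (Ioo a ℓ) := by
      intro y hy
      have h1 : (fun y' => u 0 y') =ᶠ[nhds y] (fun _ => (0:ℝ)) := by
        filter_upwards [Ioo_mem_nhds hy.1 hy.2] with x hx
        exact (hdata x ⟨le_of_lt hx.1, le_of_lt hx.2⟩).1
      have h2 := h1.deriv_eq
      rw [deriv_const] at h2
      have h3 := (hwz 0 y).deriv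
      simp only
      rw [← h3]
      exact h2
    have hcl := hIoo.closure ((cGe (0,1)).comp (Continuous.prodMk_right 0)) continuous_const
    rw [closure_Ioo (ne_of_lt haℓ)] at hcl
    exact fun y hy => hcl hy
  have hZ0 : Hh (0, ℓ) (0, 1) (1, 0) = 0 := by
    have hIoo : EqOn (fun y => Hh (0, y) (0, 1) (1, 0)) (fun _ => (0:ℝ)) (Ioo a ℓ) := by
      intro y hy
      have h1 : (fun y' => G (0, y') (1, 0)) =ᶠ[nhds y] (fun _ => (0:ℝ)) := by
        filter_upwards [Ioo_mem_nhds hy.1 hy.2] with x hx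
        exact hv00 x ⟨le_of_lt hx.1, le_of_lt hx.2⟩
      have h2 := h1.deriv_eq
      rw [deriv_const] at h2
      have h3 := (hGz 0 y (1,0)).deriv
      simp only
      rw [← h3]
      exact h2
    have hcl := hIoo.closure ((cHe (0,1) (1,0)).comp (Continuous.prodMk_right 0)) continuous_const
    rw [closure_Ioo (ne_of_lt haℓ)] at hcl
    exact hcl (right_mem_Icc.2 (le_of_lt haℓ))
  have hℓmem : ℓ ∈ Icc a ℓ := right_mem_Icc.2 (le_of_lt haℓ)
  have hε0 : ε 0 = 0 := by
    simp only [hε2]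
    have hbulk0 : (∫ z in (a + 0)..ℓ,
        ((G (0, z) (1, 0))^2 + (G (0, z) (0, 1))^2 + msq * (u 0 z)^2)) = 0 := by
      have heq : EqOn (fun z => (G (0, z) (1, 0))^2 + (G (0, z) (0, 1))^2 + msq * (u 0 z)^2)
          (fun _ => (0:ℝ)) (uIcc (a + 0) ℓ) := by
        intro y hy
        rw [uIcc_of_le (by linarith)] at hy
        have hy' : y ∈ Icc a ℓ := ⟨by linarith [hy.1], hy.2⟩
        simp only
        rw [hv00 y hy', hw0 y hy', (hdata y hy').1]
        ring
      rw [intervalIntegral.integral_congr heq]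
      simp
    rw [hbulk0, hw0 ℓ hℓmem, hv00 ℓ hℓmem, (hdata ℓ hℓmem).1, hZ0]
    ring
  have hv0 : ∀ τ : ℝ, 0 ≤ τ → τ < ℓ - a → ∀ y : ℝ, a + τ ≤ y → y ≤ ℓ →
      G (τ, y) (1, 0) = 0 := by
    intro τ hτ0 hτ1 y hy1 hy2
    have h0mem : (0:ℝ) ∈ Icc (0:ℝ) (ℓ - a) := left_mem_Icc.2 (by linarith)
    have hτmem : τ ∈ Icc (0:ℝ) (ℓ - a) := ⟨hτ0, le_of_lt hτ1⟩
    have h1 : ε τ ≤ 0 := by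
      have := hAnti h0mem hτmem hτ0
      rw [hε0] at this
      exact this
    have hbulk_nn : 0 ≤ ∫ z in (a + τ)..ℓ,
        ((G (τ, z) (1, 0))^2 + (G (τ, z) (0, 1))^2 + msq * (u τ z)^2) :=
      intervalIntegral.integral_nonneg (by linarith) (fun x _ =>
        add_nonneg (add_nonneg (sq_nonneg _) (sq_nonneg _)) (mul_nonneg hmsq (sq_nonneg _)))
    have hbdry_nn : 0 ≤
        -(β₁ / β₂) * (u τ ℓ)^2
          + (β₁' * β₂ - β₁ * β₂')⁻¹ * ((β₁ * β₂' / Real.sqrt (-(β₂ * β₂'))) * u τ ℓ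
              + Real.sqrt (-(β₂ * β₂')) * G (τ, ℓ) (0, 1))^2
          + (β₁' * β₂ - β₁ * β₂')⁻¹ * (-β₁' * G (τ, ℓ) (1, 0)
              + β₂' * Hh (τ, ℓ) (0, 1) (1, 0))^2 :=
      add_nonneg (add_nonneg (mul_nonneg (neg_nonneg.2 hβ12) (sq_nonneg _))
        (mul_nonneg (inv_nonneg.2 (le_of_lt hρ)) (sq_nonneg _)))
        (mul_nonneg (inv_nonneg.2 (le_of_lt hρ)) (sq_nonneg _))
    simp only [hε2] at h1
    have hI0 : (∫ z in (a + τ)..ℓ,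
        ((G (τ, z) (1, 0))^2 + (G (τ, z) (0, 1))^2 + msq * (u τ z)^2)) = 0 :=
      le_antisymm (by linarith) hbulk_nn
    have hzero : (G (τ, y) (1, 0))^2 + (G (τ, y) (0, 1))^2 + msq * (u τ y)^2 = 0 :=
      zero_of_integral_zero
      (fun y => (G (τ, y) (1, 0))^2 + (G (τ, y) (0, 1))^2 + msq * (u τ y)^2)
      (((((cGe (1,0)).comp (Continuous.prodMk_right τ)).pow 2).add
        (((cGe (0,1)).comp (Continuous.prodMk_right τ)).pow 2)).add
        (continuous_const.mul ((cF.comp (Continuous.prodMk_right τ)).pow 2)))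
      (fun x => add_nonneg (add_nonneg (sq_nonneg _) (sq_nonneg _))
        (mul_nonneg hmsq (sq_nonneg _)))
      (a + τ) ℓ (by linarith) hI0 y ⟨hy1, hy2⟩
    have hsq0 : (G (τ, y) (1, 0))^2 = 0 := by
      linarith [hzero, sq_nonneg (G (τ, y) (1, 0)), sq_nonneg (G (τ, y) (0, 1)),
        mul_nonneg hmsq (sq_nonneg (u τ y))]
    exact pow_eq_zero_iff (n := 2) (by norm_num) |>.1 hsq0
  have hvD : ∀ τ y : ℝ, 0 ≤ τ → τ ≤ ℓ - a → a + τ ≤ y → y ≤ ℓ → G (τ, y) (1, 0) = 0 := by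
    intro τ y h1 h2 h3 h4
    rcases lt_or_eq_of_le h2 with h | h
    · exact hv0 τ h1 h y h3 h4
    · have hy : y = ℓ := le_antisymm h4 (by rw [h] at h3; linarith)
      rw [hy, h]
      have hcv : Filter.Tendsto (fun s => G (s, ℓ) (1, 0)) (nhdsWithin (ℓ - a) (Iio (ℓ - a)))
          (nhds (G (ℓ - a, ℓ) (1, 0))) :=
        (((cGe (1,0)).comp (continuous_id.prodMk continuous_const)).continuousAt).continuousWithinAt
      have hev : (fun s => G (s, ℓ) (1, 0)) =ᶠ[nhdsWithin (ℓ - a) (Iio (ℓ - a))]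
          (fun _ => (0:ℝ)) := by
        have hIoo : Ioo (0:ℝ) (ℓ - a) ∈ nhdsWithin (ℓ - a) (Iio (ℓ - a)) :=
          Ioo_mem_nhdsLT_of_mem ⟨by linarith, le_rfl⟩
        filter_upwards [hIoo] with s hs
        exact hv0 s (le_of_lt hs.1) hs.2 ℓ (by linarith [hs.2]) le_rfl
      exact tendsto_nhds_unique hcv (Filter.Tendsto.congr' hev.symm tendsto_const_nhds)
  have hFT := intervalIntegral.integral_eq_sub_of_hasDerivAt (a := 0) (b := t)
    (f := fun s => u s z) (f' := fun s => G (s, z) (1, 0))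
    (fun s _ => hvt s z)
    (((cGe (1,0)).comp (continuous_id.prodMk continuous_const)).intervalIntegrable 0 t)
  have hzero : (∫ s in (0:ℝ)..t, G (s, z) (1, 0)) = 0 := by
    have heq : EqOn (fun s => G (s, z) (1, 0)) (fun _ => (0:ℝ)) (uIcc 0 t) := by
      intro s hs
      rw [uIcc_of_le ht0] at hs
      exact hvD s z hs.1 (le_trans hs.2 ht1) (by linarith [hs.2]) hz2
    rw [intervalIntegral.integral_congr heq]
    simp
  have hu0 : u 0 z = 0 := (hdata z ⟨by linarith, hz2⟩).1
  rw [hzero] at hFT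
  linarith [hFT]
end

section
/- Let u be a C² solution of ∂²ₜu - ∂²_z u + m² u = 0 on the left half-diamond D_L(I) with base I = [0,a], satisfying the Robin boundary condition cos α · u(t,0) + sin α · ∂_z u(t,0) = 0 at z = 0 with π/2 ≤ α < π. Define ε(t) = (1/2)∫_0^{a-t} ((∂ₜu)² + (∂_z u)² + m² u²) dz - (1/2) cot α · u(t,0)². Then ε(t) ≥ 0 and ε is non-increasing for 0 ≤ t ≤ a; hence vanishing initial data at t = 0 on [0,a] implies u ≡ 0 on {(t,z) : 0 ≤ t ≤ a, 0 ≤ z ≤ a - t}. -/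
open Set MeasureTheory Real intervalIntegral

theorem movingDeriv (F : ℝ → ℝ → ℝ) (hF : ContDiff ℝ 1 (fun p : ℝ × ℝ => F p.1 p.2))
    (a t₀ : ℝ) :
    HasDerivAt (fun t => ∫ z in (0:ℝ)..(a - t), F t z)
      (-F t₀ (a - t₀) + ∫ z in (0:ℝ)..(a - t₀),
        fderiv ℝ (fun p : ℝ × ℝ => F p.1 p.2) (t₀, z) (1, 0)) t₀ := by
  set Fc : ℝ × ℝ → ℝ := fun p => F p.1 p.2 with hFc
  set Ft : ℝ → ℝ → ℝ := fun t z => fderiv ℝ Fc (t, z) (1, 0) with hFt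
  have hFcont : Continuous Fc := hF.continuous
  have hFtz : ∀ t : ℝ, Continuous (fun z' => F t z') := by
    intro t
    exact hFcont.comp (Continuous.prodMk_right t)
  have hcurve : ∀ (z t : ℝ), HasDerivAt (fun s : ℝ => ((s, z) : ℝ × ℝ)) (1, 0) t := by
    intro z t
    exact (hasDerivAt_id t).prodMk (hasDerivAt_const t z)
  have hFt_deriv : ∀ t z, HasDerivAt (fun s => F s z) (Ft t z) t := by
    intro t z
    exact ((hF.differentiable one_ne_zero (t, z)).hasFDerivAt).comp_hasDerivAt t (hcurve z t)
  have hFt_cont : Continuous fun p : ℝ × ℝ => Ft p.1 p.2 := by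
    exact (hF.continuous_fderiv one_ne_zero).clm_apply continuous_const
  -- bound for Ft on a compact neighborhood
  obtain ⟨C, hC⟩ := ((isCompact_closedBall t₀ 1).prod isCompact_uIcc).exists_bound_of_continuousOn
    (s := Metric.closedBall t₀ 1 ×ˢ uIcc (0:ℝ) (a - t₀)) hFt_cont.continuousOn
  -- part A : fixed endpoints, varying parameter
  have hA : HasDerivAt (fun t => ∫ z in (0:ℝ)..(a - t₀), F t z)
      (∫ z in (0:ℝ)..(a - t₀), Ft t₀ z) t₀ := by
    refine (intervalIntegral.hasDerivAt_integral_of_dominated_loc_of_deriv_le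
      (F := F) (F' := Ft) (bound := fun _ => C) (Metric.ball_mem_nhds t₀ one_pos)
      (Filter.Eventually.of_forall fun t => (hFtz t).aestronglyMeasurable)
      ((hFtz t₀).intervalIntegrable _ _)
      ((hFt_cont.comp (Continuous.prodMk_right t₀)).aestronglyMeasurable)
      (ae_of_all _ fun z hz t ht => hC (t, z)
        ⟨Metric.ball_subset_closedBall ht, uIoc_subset_uIcc hz⟩)
      intervalIntegrable_const
      (ae_of_all _ fun z hz t ht => hFt_deriv t z)).2
  -- part B : moving endpoint
  have hconv : Convex ℝ ((Metric.closedBall t₀ 1 : Set ℝ) ×ˢ Icc (a - t₀ - 1) (a - t₀ + 1)) :=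
    (convex_closedBall _ _).prod (convex_Icc _ _)
  obtain ⟨L, hL⟩ := ((isCompact_closedBall t₀ 1).prod isCompact_Icc).exists_bound_of_continuousOn
    (s := Metric.closedBall t₀ 1 ×ˢ Icc (a - t₀ - 1) (a - t₀ + 1))
    (hF.continuous_fderiv one_ne_zero).continuousOn
  have hL0 : 0 ≤ L := le_trans (norm_nonneg _)
    (hL (t₀, a - t₀) ⟨Metric.mem_closedBall_self one_pos.le, by constructor <;> simp⟩)
  have hmem : ∀ t ∈ Metric.ball t₀ 1, ∀ z ∈ uIcc (a - t₀) (a - t),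
      ((t, z) : ℝ × ℝ) ∈ (Metric.closedBall t₀ 1 : Set ℝ) ×ˢ Icc (a - t₀ - 1) (a - t₀ + 1) ∧
      ((t₀, z) : ℝ × ℝ) ∈ (Metric.closedBall t₀ 1 : Set ℝ) ×ˢ Icc (a - t₀ - 1) (a - t₀ + 1) := by
    intro t ht z hz
    have ht' : |t - t₀| < 1 := by simpa [Real.dist_eq] using ht
    have h1 : a - t₀ - 1 ≤ z ∧ z ≤ a - t₀ + 1 := by
      rcases hz with ⟨h2, h3⟩
      rcases le_total (a - t₀) (a - t) with hc | hc <;>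
        simp [inf_eq_left.2 hc, inf_eq_right.2 hc, sup_eq_left.2 hc, sup_eq_right.2 hc,
          min_eq_left, max_eq_right] at h2 h3 <;>
      constructor <;> cases abs_lt.1 ht' <;> linarith
    exact ⟨⟨Metric.ball_subset_closedBall ht, h1.1, h1.2⟩, ⟨Metric.mem_closedBall_self one_pos.le, h1.1, h1.2⟩⟩
  have hlip : ∀ t ∈ Metric.ball t₀ 1, ∀ z ∈ uIcc (a - t₀) (a - t),
      ‖F t z - F t₀ z‖ ≤ L * ‖t - t₀‖ := by
    intro t ht z hz
    obtain ⟨hm1, hm2⟩ := hmem t ht z hz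
    have := hconv.norm_image_sub_le_of_norm_fderiv_le
      (f := Fc) (fun p _ => hF.differentiable one_ne_zero p) hL hm2 hm1
    calc ‖F t z - F t₀ z‖ = ‖Fc (t, z) - Fc (t₀, z)‖ := rfl
      _ ≤ L * ‖((t, z) : ℝ × ℝ) - (t₀, z)‖ := this
      _ = L * ‖t - t₀‖ := by
          congr 1
          simp [Prod.norm_def, Prod.sub_def]
  have hφ₂ : HasDerivAt (fun t => ∫ z in (a - t₀)..(a - t), (F t z - F t₀ z)) 0 t₀ := by
    rw [hasDerivAt_iff_isLittleO]
    have hO : ∀ t ∈ Metric.ball t₀ 1,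
        ‖∫ z in (a - t₀)..(a - t), (F t z - F t₀ z)‖ ≤ L * ‖t - t₀‖ * |t - t₀| := by
      intro t ht
      have := intervalIntegral.norm_integral_le_of_norm_le_const
        (C := L * ‖t - t₀‖) (f := fun z => F t z - F t₀ z) (a := a - t₀) (b := a - t)
        (fun z hz => hlip t ht z (uIoc_subset_uIcc hz))
      calc ‖∫ z in (a - t₀)..(a - t), (F t z - F t₀ z)‖
          ≤ L * ‖t - t₀‖ * |(a - t) - (a - t₀)| := this
        _ = L * ‖t - t₀‖ * |t - t₀| := by rw [show (a - t) - (a - t₀) = -(t - t₀) by ring, abs_neg]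
    rw [Asymptotics.isLittleO_iff]
    intro c hc
    have hδ : 0 < min 1 (c / (L + 1)) := lt_min one_pos (by positivity)
    filter_upwards [Metric.ball_mem_nhds t₀ hδ] with t ht
    have ht1 : t ∈ Metric.ball t₀ 1 :=
      Metric.mem_ball.2 (lt_of_lt_of_le (Metric.mem_ball.1 ht) (min_le_left _ _))
    have h2 := hO t ht1
    have htc : |t - t₀| < c / (L + 1) := by
      have := lt_of_lt_of_le (Metric.mem_ball.1 ht) (min_le_right _ _)
      simpa [Real.dist_eq] using this
    have habs : |t - t₀| ≤ 1 := by
      have := Metric.mem_ball.1 ht1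
      simp only [Real.dist_eq] at this
      linarith
    simp only [intervalIntegral.integral_same, sub_zero, smul_zero]
    calc ‖∫ z in (a - t₀)..(a - t), (F t z - F t₀ z)‖
        ≤ L * ‖t - t₀‖ * |t - t₀| := h2
      _ ≤ c * ‖t - t₀‖ := by
          rw [Real.norm_eq_abs]
          have h3 : L * |t - t₀| ≤ c := by
            have h4 : L * |t - t₀| ≤ L * (c / (L + 1)) :=
              mul_le_mul_of_nonneg_left htc.le hL0
            have h5 : L * (c / (L + 1)) ≤ c := by
              rw [div_eq_mul_inv]
              rw [show L * (c * (L + 1)⁻¹) = c * (L * (L + 1)⁻¹) by ring]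
              have : L * (L + 1)⁻¹ ≤ 1 := by
                rw [mul_inv_le_iff₀ (by linarith)]
                linarith
              nlinarith
            linarith
          nlinarith [abs_nonneg (t - t₀)]
  -- part φ₁ : frozen parameter, moving endpoint
  have hΦ : HasDerivAt (fun x => ∫ z in (a - t₀)..x, F t₀ z) (F t₀ (a - t₀)) (a - t₀) :=
    intervalIntegral.integral_hasDerivAt_right ((hFtz t₀).intervalIntegrable _ _)
      ((hFtz t₀).stronglyMeasurableAtFilter _ _) (hFtz t₀).continuousAt
  have hφ₁ : HasDerivAt (fun t => ∫ z in (a - t₀)..(a - t), F t₀ z) (-F t₀ (a - t₀)) t₀ := by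
    have hcv : HasDerivAt (fun t : ℝ => a - t) (-1) t₀ := (hasDerivAt_id t₀).const_sub a
    have := hΦ.comp t₀ hcv
    simpa [mul_comm, Function.comp_def] using this
  have hφ : HasDerivAt (fun t => ∫ z in (a - t₀)..(a - t), F t z) (-F t₀ (a - t₀)) t₀ := by
    have heq : (fun t => ∫ z in (a - t₀)..(a - t), F t z)
        = fun t => (∫ z in (a - t₀)..(a - t), F t₀ z)
            + ∫ z in (a - t₀)..(a - t), (F t z - F t₀ z) := by
      funext t
      rw [← intervalIntegral.integral_add (g := fun z => F t z - F t₀ z) ((hFtz t₀).intervalIntegrable _ _)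
        (((hFtz t).sub (hFtz t₀)).intervalIntegrable _ _)]
      simp
    rw [heq]
    simpa [Pi.add_def] using hφ₁.add hφ₂
  have hsplit : (fun t => ∫ z in (0:ℝ)..(a - t), F t z)
      = fun t => (∫ z in (0:ℝ)..(a - t₀), F t z) + ∫ z in (a - t₀)..(a - t), F t z := by
    funext t
    rw [intervalIntegral.integral_add_adjacent_intervals ((hFtz t).intervalIntegrable _ _)
      ((hFtz t).intervalIntegrable _ _)]
  rw [hsplit]
  have := hA.add hφ
  simpa [add_comm, Pi.add_def] using this


noncomputable def PTd (f : ℝ × ℝ → ℝ) : ℝ × ℝ → ℝ := fun p => fderiv ℝ f p (1, 0)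
noncomputable def PZd (f : ℝ × ℝ → ℝ) : ℝ × ℝ → ℝ := fun p => fderiv ℝ f p (0, 1)

theorem hasDerivAt_PTd (f : ℝ × ℝ → ℝ) (hf : Differentiable ℝ f) (t z : ℝ) :
    HasDerivAt (fun s => f (s, z)) (PTd f (t, z)) t :=
  (hf (t, z)).hasFDerivAt.comp_hasDerivAt t ((hasDerivAt_id t).prodMk (hasDerivAt_const t z))

theorem hasDerivAt_PZd (f : ℝ × ℝ → ℝ) (hf : Differentiable ℝ f) (t z : ℝ) :
    HasDerivAt (fun z' => f (t, z')) (PZd f (t, z)) z :=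
  (hf (t, z)).hasFDerivAt.comp_hasDerivAt z ((hasDerivAt_const z t).prodMk (hasDerivAt_id z))

theorem contDiff_PTd (f : ℝ × ℝ → ℝ) (hf : ContDiff ℝ 2 f) : ContDiff ℝ 1 (PTd f) :=
  (hf.fderiv_right (by norm_num)).clm_apply contDiff_const

theorem contDiff_PZd (f : ℝ × ℝ → ℝ) (hf : ContDiff ℝ 2 f) : ContDiff ℝ 1 (PZd f) :=
  (hf.fderiv_right (by norm_num)).clm_apply contDiff_const

theorem continuous_PTd (f : ℝ × ℝ → ℝ) (hf : ContDiff ℝ 1 f) : Continuous (PTd f) :=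
  (hf.continuous_fderiv one_ne_zero).clm_apply continuous_const

theorem continuous_PZd (f : ℝ × ℝ → ℝ) (hf : ContDiff ℝ 1 f) : Continuous (PZd f) :=
  (hf.continuous_fderiv one_ne_zero).clm_apply continuous_const

theorem mixed_symm (f : ℝ × ℝ → ℝ) (hf : ContDiff ℝ 2 f) (t z : ℝ) :
    PZd (PTd f) (t, z) = PTd (PZd f) (t, z) := by
  have hdf : Differentiable ℝ (fderiv ℝ f) :=
    (hf.fderiv_right (m := 1) (le_refl 2)).differentiable one_ne_zero
  have h1 : ∀ v w : ℝ × ℝ, fderiv ℝ (fun p : ℝ × ℝ => fderiv ℝ f p v) (t, z) w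
      = fderiv ℝ (fderiv ℝ f) (t, z) w v := by
    intro v w
    rw [fderiv_clm_apply (hdf (t, z)) (differentiableAt_const v)]
    simp
  show fderiv ℝ (fun p : ℝ × ℝ => fderiv ℝ f p (1,0)) (t, z) (0,1)
      = fderiv ℝ (fun p : ℝ × ℝ => fderiv ℝ f p (0,1)) (t, z) (1,0)
  rw [h1, h1]
  exact second_derivative_symmetric
    (fun y => (hf.differentiable (by norm_num) y).hasFDerivAt)
    (hdf (t, z)).hasFDerivAt _ _

noncomputable def En (u : ℝ → ℝ → ℝ) (msq : ℝ) (t z : ℝ) : ℝ :=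
  PTd (fun p : ℝ × ℝ => u p.1 p.2) (t, z) ^ 2
    + PZd (fun p : ℝ × ℝ => u p.1 p.2) (t, z) ^ 2 + msq * u t z ^ 2

theorem En_nonneg (u : ℝ → ℝ → ℝ) (msq : ℝ) (hmsq : 0 ≤ msq) (t z : ℝ) :
    0 ≤ En u msq t z := by
  unfold En; positivity

theorem contDiff_En (u : ℝ → ℝ → ℝ) (msq : ℝ)
    (hu : ContDiff ℝ 2 (fun p : ℝ × ℝ => u p.1 p.2)) :
    ContDiff ℝ 1 (fun p : ℝ × ℝ => En u msq p.1 p.2) := by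
  have : (fun p : ℝ × ℝ => En u msq p.1 p.2)
      = fun p : ℝ × ℝ => PTd (fun p : ℝ × ℝ => u p.1 p.2) p ^ 2
          + PZd (fun p : ℝ × ℝ => u p.1 p.2) p ^ 2 + msq * (u p.1 p.2) ^ 2 := rfl
  rw [this]
  exact (((contDiff_PTd _ hu).pow 2).add ((contDiff_PZd _ hu).pow 2)).add
    (contDiff_const.mul ((hu.of_le one_le_two).pow 2))

theorem continuous_En (u : ℝ → ℝ → ℝ) (msq : ℝ)
    (hu : ContDiff ℝ 2 (fun p : ℝ × ℝ => u p.1 p.2)) :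
    Continuous (fun p : ℝ × ℝ => En u msq p.1 p.2) :=
  (contDiff_En u msq hu).continuous

theorem deriv_fst_eq (u : ℝ → ℝ → ℝ) (hu : ContDiff ℝ 2 (fun p : ℝ × ℝ => u p.1 p.2))
    (t z : ℝ) : deriv (fun s => u s z) t = PTd (fun p : ℝ × ℝ => u p.1 p.2) (t, z) :=
  (hasDerivAt_PTd _ (hu.differentiable two_ne_zero) t z).deriv

theorem deriv_snd_eq (u : ℝ → ℝ → ℝ) (hu : ContDiff ℝ 2 (fun p : ℝ × ℝ => u p.1 p.2))
    (t z : ℝ) : deriv (u t) z = PZd (fun p : ℝ × ℝ => u p.1 p.2) (t, z) :=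
  (hasDerivAt_PZd _ (hu.differentiable two_ne_zero) t z).deriv

theorem flux (u : ℝ → ℝ → ℝ) (msq a : ℝ)
    (hu : ContDiff ℝ 2 (fun p : ℝ × ℝ => u p.1 p.2)) (t₀ : ℝ) (hta : t₀ ≤ a)
    (hPDE' : ∀ z, 0 ≤ z → z ≤ a - t₀ →
      PTd (PTd (fun p : ℝ × ℝ => u p.1 p.2)) (t₀, z)
        = PZd (PZd (fun p : ℝ × ℝ => u p.1 p.2)) (t₀, z) - msq * u t₀ z) :
    (∫ z in (0:ℝ)..(a - t₀), PTd (fun p : ℝ × ℝ => En u msq p.1 p.2) (t₀, z))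
      = 2 * (PTd (fun p : ℝ × ℝ => u p.1 p.2) (t₀, a - t₀)
              * PZd (fun p : ℝ × ℝ => u p.1 p.2) (t₀, a - t₀))
        - 2 * (PTd (fun p : ℝ × ℝ => u p.1 p.2) (t₀, 0)
              * PZd (fun p : ℝ × ℝ => u p.1 p.2) (t₀, 0)) := by
  set W : ℝ × ℝ → ℝ := fun p => u p.1 p.2 with hW
  have hWd : Differentiable ℝ W := hu.differentiable two_ne_zero
  have hPT1 : ContDiff ℝ 1 (PTd W) := contDiff_PTd W hu
  have hPZ1 : ContDiff ℝ 1 (PZd W) := contDiff_PZd W hu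
  have hPTd' : Differentiable ℝ (PTd W) := hPT1.differentiable one_ne_zero
  have hPZd' : Differentiable ℝ (PZd W) := hPZ1.differentiable one_ne_zero
  have hb : (0:ℝ) ≤ a - t₀ := by linarith
  have hGd : ∀ z : ℝ, HasDerivAt (fun z' => 2 * (PTd W (t₀, z') * PZd W (t₀, z')))
      (2 * (PZd (PTd W) (t₀, z) * PZd W (t₀, z) + PTd W (t₀, z) * PZd (PZd W) (t₀, z))) z :=
    fun z => ((hasDerivAt_PZd _ hPTd' t₀ z).mul (hasDerivAt_PZd _ hPZd' t₀ z)).const_mul 2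
  have hkey : ∀ z ∈ uIcc (0:ℝ) (a - t₀),
      PTd (fun p : ℝ × ℝ => En u msq p.1 p.2) (t₀, z)
        = deriv (fun z' => 2 * (PTd W (t₀, z') * PZd W (t₀, z'))) z := by
    intro z hz
    rw [uIcc_of_le hb] at hz
    have hL : HasDerivAt (fun s => En u msq s z)
        (PTd (fun p : ℝ × ℝ => En u msq p.1 p.2) (t₀, z)) t₀ :=
      hasDerivAt_PTd _ ((contDiff_En u msq hu).differentiable one_ne_zero) t₀ z
    have h1 := (hasDerivAt_PTd (PTd W) hPTd' t₀ z).pow 2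
    have h2 := (hasDerivAt_PTd (PZd W) hPZd' t₀ z).pow 2
    have h3 := ((hasDerivAt_PTd W hWd t₀ z).pow 2).const_mul msq
    have hR : HasDerivAt (fun s => En u msq s z)
        ((↑2 * PTd W (t₀, z) ^ (2-1) * PTd (PTd W) (t₀, z)
          + ↑2 * PZd W (t₀, z) ^ (2-1) * PTd (PZd W) (t₀, z))
          + msq * (↑2 * W (t₀, z) ^ (2-1) * PTd W (t₀, z))) t₀ := (h1.add h2).add h3
    have hEq := hL.unique hR
    rw [(hGd z).deriv, hEq, hPDE' z hz.1 hz.2, ← mixed_symm W hu t₀ z]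
    show (2 * PTd W (t₀, z) ^ (2-1) * (PZd (PZd W) (t₀, z) - msq * u t₀ z)
          + 2 * PZd W (t₀, z) ^ (2-1) * PZd (PTd W) (t₀, z))
          + msq * (2 * W (t₀, z) ^ (2-1) * PTd W (t₀, z))
        = 2 * (PZd (PTd W) (t₀, z) * PZd W (t₀, z) + PTd W (t₀, z) * PZd (PZd W) (t₀, z))
    have : W (t₀, z) = u t₀ z := rfl
    rw [this]
    ring
  rw [intervalIntegral.integral_congr hkey]
  have hderiv_eq : deriv (fun z' => 2 * (PTd W (t₀, z') * PZd W (t₀, z')))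
      = fun z => 2 * (PZd (PTd W) (t₀, z) * PZd W (t₀, z)
          + PTd W (t₀, z) * PZd (PZd W) (t₀, z)) :=
    funext fun z => (hGd z).deriv
  have hint : IntervalIntegrable (deriv (fun z' => 2 * (PTd W (t₀, z') * PZd W (t₀, z'))))
      volume 0 (a - t₀) := by
    rw [hderiv_eq]
    apply Continuous.intervalIntegrable
    have c1 : Continuous fun z : ℝ => PZd (PTd W) (t₀, z) :=
      (continuous_PZd _ hPT1).comp (Continuous.prodMk_right t₀)
    have c2 : Continuous fun z : ℝ => PZd (PZd W) (t₀, z) :=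
      (continuous_PZd _ hPZ1).comp (Continuous.prodMk_right t₀)
    have c3 : Continuous fun z : ℝ => PTd W (t₀, z) :=
      (hPT1.continuous).comp (Continuous.prodMk_right t₀)
    have c4 : Continuous fun z : ℝ => PZd W (t₀, z) :=
      (hPZ1.continuous).comp (Continuous.prodMk_right t₀)
    exact continuous_const.mul ((c1.mul c4).add (c3.mul c2))
  rw [intervalIntegral.integral_deriv_eq_sub (fun x _ => (hGd x).differentiableAt) hint]

set_option maxHeartbeats 1000000 in
/-- Energy decay and uniqueness on the left half-diamond with a Robin boundary
condition at `z = 0`, for `π/2 ≤ α < π`. -/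
theorem stmt4 (u : ℝ → ℝ → ℝ) (a msq α : ℝ) (ha : 0 < a) (hmsq : 0 ≤ msq)
    (hα₁ : Real.pi / 2 ≤ α) (hα₂ : α < Real.pi)
    (hu : ContDiff ℝ 2 (fun p : ℝ × ℝ => u p.1 p.2))
    (hPDE : ∀ t z : ℝ, 0 ≤ t → t ≤ a → 0 ≤ z → z ≤ a - t →
      deriv (fun s => deriv (fun s' => u s' z) s) t
        - deriv (deriv (u t)) z + msq * u t z = 0)
    (hRobin : ∀ t ∈ Icc (0:ℝ) a,
      Real.cos α * u t 0 + Real.sin α * deriv (u t) 0 = 0) :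
    ∀ ε : ℝ → ℝ,
      (ε = fun t =>
        (1/2) * (∫ z in (0:ℝ)..(a - t),
          ((deriv (fun s => u s z) t)^2 + (deriv (u t) z)^2 + msq * (u t z)^2))
        - (1/2) * (Real.cos α / Real.sin α) * (u t 0)^2) →
      (∀ t ∈ Icc (0:ℝ) a, 0 ≤ ε t) ∧
      AntitoneOn ε (Icc (0:ℝ) a) ∧
      ((∀ z ∈ Icc (0:ℝ) a, u 0 z = 0 ∧ deriv (fun s => u s z) 0 = 0) →
        ∀ t z : ℝ, 0 ≤ t → t ≤ a → 0 ≤ z → z ≤ a - t → u t z = 0) := by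
  intro ε hε
  set W : ℝ × ℝ → ℝ := fun p => u p.1 p.2 with hW
  have hWd : Differentiable ℝ W := hu.differentiable two_ne_zero
  have hsin : 0 < Real.sin α :=
    Real.sin_pos_of_pos_of_lt_pi (by nlinarith [Real.pi_pos]) hα₂
  have hcos : Real.cos α ≤ 0 :=
    Real.cos_nonpos_of_pi_div_two_le_of_le hα₁ (by nlinarith [Real.pi_pos])
  have hcle : Real.cos α / Real.sin α ≤ 0 := div_nonpos_iff.mpr (Or.inr ⟨hcos, hsin.le⟩)
  have hEcont : ∀ t : ℝ, Continuous fun z => En u msq t z :=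
    fun t => (continuous_En u msq hu).comp (Continuous.prodMk_right t)
  have hεF : ε = fun t => (1/2) * (∫ z in (0:ℝ)..(a - t), En u msq t z)
      - (1/2) * (Real.cos α / Real.sin α) * (u t 0 * u t 0) := by
    rw [hε]
    funext t
    have h1 : ∀ z : ℝ, (deriv (fun s => u s z) t)^2 + (deriv (u t) z)^2 + msq * (u t z)^2
        = En u msq t z := by
      intro z
      rw [deriv_fst_eq u hu, deriv_snd_eq u hu]
      rfl
    simp only [h1]
    ring
  have hNonneg : ∀ t ∈ Icc (0:ℝ) a, 0 ≤ ε t := by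
    intro t ht
    simp only [hεF]
    have hI : 0 ≤ ∫ z in (0:ℝ)..(a - t), En u msq t z :=
      intervalIntegral.integral_nonneg (by linarith [ht.2]) (fun z _ => En_nonneg u msq hmsq t z)
    nlinarith [mul_nonneg (neg_nonneg.2 hcle) (mul_self_nonneg (u t 0))]
  have hPDE' : ∀ t z : ℝ, 0 ≤ t → t ≤ a → 0 ≤ z → z ≤ a - t →
      PTd (PTd W) (t, z) = PZd (PZd W) (t, z) - msq * u t z := by
    intro t z h1 h2 h3 h4
    have h := hPDE t z h1 h2 h3 h4
    have e1 : deriv (fun s => deriv (fun s' => u s' z) s) t = PTd (PTd W) (t, z) := by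
      have he : (fun s => deriv (fun s' => u s' z) s) = fun s => PTd W (s, z) :=
        funext fun s => deriv_fst_eq u hu s z
      rw [he]
      exact (hasDerivAt_PTd (PTd W) ((contDiff_PTd W hu).differentiable one_ne_zero) t z).deriv
    have e2 : deriv (deriv (u t)) z = PZd (PZd W) (t, z) := by
      have he : deriv (u t) = fun z' => PZd W (t, z') :=
        funext fun z' => deriv_snd_eq u hu t z'
      rw [he]
      exact (hasDerivAt_PZd (PZd W) ((contDiff_PZd W hu).differentiable one_ne_zero) t z).deriv
    rw [e1, e2] at h
    linarith
  have hED : ∀ t₀ : ℝ, HasDerivAt ε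
      ((1/2) * (-En u msq t₀ (a - t₀)
          + ∫ z in (0:ℝ)..(a - t₀), PTd (fun p : ℝ × ℝ => En u msq p.1 p.2) (t₀, z))
        - (1/2) * (Real.cos α / Real.sin α)
            * (PTd W (t₀, 0) * u t₀ 0 + u t₀ 0 * PTd W (t₀, 0))) t₀ := by
    intro t₀
    rw [hεF]
    have hMain := movingDeriv (fun t z => En u msq t z) (contDiff_En u msq hu) a t₀
    have hBdry := ((hasDerivAt_PTd W hWd t₀ 0).mul (hasDerivAt_PTd W hWd t₀ 0)).const_mul
      ((1/2) * (Real.cos α / Real.sin α))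
    exact (hMain.const_mul (1/2)).sub hBdry
  have hderivle : ∀ x ∈ Ioo (0:ℝ) a, deriv ε x ≤ 0 := by
    intro x hx
    rw [(hED x).deriv]
    have hRx := hRobin x ⟨hx.1.le, hx.2.le⟩
    rw [deriv_snd_eq u hu] at hRx
    have hflux := flux u msq a hu x hx.2.le (fun z hz1 hz2 => hPDE' x z hx.1.le hx.2.le hz1 hz2)
    rw [hflux]
    have hPZ0 : PZd W (x, 0) = -(Real.cos α / Real.sin α) * u x 0 := by
      field_simp
      linarith
    have hEn : En u msq x (a - x)
        = PTd W (x, a - x)^2 + PZd W (x, a - x)^2 + msq * u x (a - x)^2 := rfl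
    rw [hEn, hPZ0]
    nlinarith [sq_nonneg (PTd W (x, a - x) - PZd W (x, a - x)),
      mul_nonneg hmsq (sq_nonneg (u x (a - x)))]
  have hdiffε : ∀ x : ℝ, DifferentiableAt ℝ ε x := fun x => (hED x).differentiableAt
  have hAnti : AntitoneOn ε (Icc 0 a) := by
    apply antitoneOn_of_deriv_nonpos (convex_Icc 0 a)
      (Differentiable.continuous (fun x => hdiffε x)).continuousOn
      (fun x _ => (hdiffε x).differentiableWithinAt)
    intro x hx
    rw [interior_Icc] at hx
    exact hderivle x hx
  refine ⟨hNonneg, hAnti, ?_⟩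
  intro h0 t z h1 h2 h3 h4
  have hε0 : ε 0 = 0 := by
    simp only [hεF]
    have hne : ∀ᵐ x : ℝ, x ≠ a := by
      refine MeasureTheory.ae_iff.2 ?_
      simp [Real.volume_singleton]
    have hint0 : ∫ z' in (0:ℝ)..(a - 0), En u msq 0 z' = 0 := by
      have heq0 : ∫ z' in (0:ℝ)..(a - 0), En u msq 0 z' = ∫ z' in (0:ℝ)..(a - 0), (0:ℝ) := by
        apply intervalIntegral.integral_congr_ae
        filter_upwards [hne] with x hxa hx
        rw [uIoc_of_le (by linarith : (0:ℝ) ≤ a - 0)] at hx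
        have hxo : x ∈ Ioo (0:ℝ) a := ⟨hx.1, lt_of_le_of_ne (by simpa using hx.2) hxa⟩
        have hu0 : u 0 x = 0 := (h0 x ⟨hxo.1.le, hxo.2.le⟩).1
        have hut : PTd W (0, x) = 0 := by
          rw [← deriv_fst_eq u hu]
          exact (h0 x ⟨hxo.1.le, hxo.2.le⟩).2
        have huz : PZd W (0, x) = 0 := by
          rw [← deriv_snd_eq u hu]
          have hev : u 0 =ᶠ[nhds x] fun _ => (0:ℝ) := by
            filter_upwards [Icc_mem_nhds hxo.1 hxo.2] with y hy
            exact (h0 y hy).1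
          rw [hev.deriv_eq]
          simp
        show En u msq 0 x = 0
        rw [show En u msq 0 x = PTd W (0, x)^2 + PZd W (0, x)^2 + msq * u 0 x^2 from rfl,
          hu0, hut, huz]
        ring
      rw [heq0]
      simp
    rw [hint0]
    have hu00 : u 0 0 = 0 := (h0 0 ⟨le_refl 0, ha.le⟩).1
    rw [hu00]
    ring
  have hεt0 : ∀ s ∈ Icc (0:ℝ) a, ε s = 0 := by
    intro s hs
    have h1' := hAnti (left_mem_Icc.2 ha.le) hs hs.1
    have h2' := hNonneg s hs
    rw [hε0] at h1'
    linarith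
  have hInt0 : ∀ s ∈ Icc (0:ℝ) a, ∫ z' in (0:ℝ)..(a - s), En u msq s z' = 0 := by
    intro s hs
    have h1' := hεt0 s hs
    simp only [hεF] at h1'
    have hI : 0 ≤ ∫ z' in (0:ℝ)..(a - s), En u msq s z' :=
      intervalIntegral.integral_nonneg (by linarith [hs.2]) (fun w _ => En_nonneg u msq hmsq s w)
    nlinarith [mul_nonneg (neg_nonneg.2 hcle) (mul_self_nonneg (u s 0))]
  have hPrefix : ∀ s ∈ Icc (0:ℝ) a, ∀ y ∈ Icc (0:ℝ) (a - s),
      ∫ z' in (0:ℝ)..y, En u msq s z' = 0 := by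
    intro s hs y hy
    have hsplit := intervalIntegral.integral_add_adjacent_intervals
      (a := (0:ℝ)) (b := y) (c := a - s) (f := fun z' => En u msq s z') (μ := volume)
      ((hEcont s).intervalIntegrable _ _) ((hEcont s).intervalIntegrable _ _)
    have hI1 : 0 ≤ ∫ z' in (0:ℝ)..y, En u msq s z' :=
      intervalIntegral.integral_nonneg hy.1 (fun w _ => En_nonneg u msq hmsq s w)
    have hI2 : 0 ≤ ∫ z' in y..(a - s), En u msq s z' :=
      intervalIntegral.integral_nonneg hy.2 (fun w _ => En_nonneg u msq hmsq s w)
    have hI3 := hInt0 s hs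
    linarith
  have hEnIoo : ∀ s ∈ Icc (0:ℝ) a, ∀ w ∈ Ioo (0:ℝ) (a - s), En u msq s w = 0 := by
    intro s hs w hw
    have hG : HasDerivAt (fun y => ∫ z' in (0:ℝ)..y, En u msq s z') (En u msq s w) w :=
      intervalIntegral.integral_hasDerivAt_right ((hEcont s).intervalIntegrable _ _)
        ((hEcont s).stronglyMeasurableAtFilter _ _) (hEcont s).continuousAt
    have hev : (fun y => ∫ z' in (0:ℝ)..y, En u msq s z') =ᶠ[nhds w] fun _ => (0:ℝ) := by
      filter_upwards [Ioo_mem_nhds hw.1 hw.2] with y hy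
      exact hPrefix s hs y ⟨hy.1.le, hy.2.le⟩
    have hd := hG.deriv
    rw [hev.deriv_eq] at hd
    simp at hd
    exact hd.symm
  have hEnIcc : ∀ s, 0 ≤ s → s < a → ∀ w ∈ Icc (0:ℝ) (a - s), En u msq s w = 0 := by
    intro s hs0 hsa w hw
    have hsub : Icc (0:ℝ) (a - s) ⊆ {w | En u msq s w = 0} := by
      rw [← closure_Ioo (by intro hc; linarith : (0:ℝ) ≠ a - s)]
      apply closure_minimal
      · intro w' hw'
        exact hEnIoo s ⟨hs0, hsa.le⟩ w' hw'
      · exact isClosed_eq (hEcont s) continuous_const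
    exact hsub hw
  have hPT0 : ∀ s w : ℝ, 0 ≤ s → s < a → 0 ≤ w → w ≤ a - s → PTd W (s, w) = 0 := by
    intro s w hs0 hsa hw0 hwa
    have h := hEnIcc s hs0 hsa w ⟨hw0, hwa⟩
    have hsq : PTd W (s, w) ^ 2 = 0 := by
      have hh : PTd W (s, w)^2 + PZd W (s, w)^2 + msq * u s w^2 = 0 := h
      nlinarith [sq_nonneg (PZd W (s, w)), mul_nonneg hmsq (sq_nonneg (u s w)),
        sq_nonneg (PTd W (s, w))]
    exact pow_eq_zero_iff two_ne_zero |>.1 hsq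
  rcases eq_or_lt_of_le h1 with ht0 | ht0
  · rw [← ht0]
    exact (h0 z ⟨h3, by linarith⟩).1
  · have hderiv0 : ∀ s ∈ Ioo (0:ℝ) t, deriv (fun r => u r z) s = 0 := by
      intro s hs
      rw [deriv_fst_eq u hu]
      exact hPT0 s z hs.1.le (by linarith [hs.2]) h3 (by linarith [hs.2])
    have hgc : ContinuousOn (fun r => u r z) (Icc 0 t) :=
      (Differentiable.continuous
        (fun r => (hasDerivAt_PTd W hWd r z).differentiableAt)).continuousOn
    have hgd : DifferentiableOn ℝ (fun r => u r z) (interior (Icc (0:ℝ) t)) :=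
      fun r _ => (hasDerivAt_PTd W hWd r z).differentiableAt.differentiableWithinAt
    have hmono : MonotoneOn (fun r => u r z) (Icc 0 t) := by
      apply monotoneOn_of_deriv_nonneg (convex_Icc 0 t) hgc hgd
      intro r hr
      rw [interior_Icc] at hr
      rw [hderiv0 r hr]
    have hanti : AntitoneOn (fun r => u r z) (Icc 0 t) := by
      apply antitoneOn_of_deriv_nonpos (convex_Icc 0 t) hgc hgd
      intro r hr
      rw [interior_Icc] at hr
      rw [hderiv0 r hr]
    have h0t : (0:ℝ) ∈ Icc (0:ℝ) t := ⟨le_refl 0, ht0.le⟩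
    have htt : t ∈ Icc (0:ℝ) t := ⟨ht0.le, le_refl t⟩
    have e1 := hmono h0t htt ht0.le
    have e2 := hanti h0t htt ht0.le
    have hu0z : u 0 z = 0 := (h0 z ⟨h3, by linarith⟩).1
    simp only at e1 e2
    linarith
end

section
/- Let A be a self-adjoint operator with A ≥ ω₁² > 0 and let f : ℝ → D(A) be twice continuously differentiable with compact support (in the graph norm of A). Then u(t) = ∫_t^∞ (sin(√A (t'-t))/√A) f(t') dt' is twice continuously differentiable, takes values in D(A), satisfies u''(t) + A u(t) = f(t) for all t, and u(t) = 0 for t larger than the supremum of the support of f. -/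
open MeasureTheory Set

namespace Stmt9Aux

/-- MVT-type inequality on a segment. -/
lemma abs_sub_le_of_deriv {φ φ' : ℝ → ℝ} {M u v : ℝ}
    (hd : ∀ t, HasDerivAt φ (φ' t) t) (hM : ∀ t ∈ uIcc u v, |φ' t| ≤ M) :
    |φ v - φ u| ≤ M * |v - u| := by
  have := Convex.norm_image_sub_le_of_norm_hasDerivWithin_le (𝕜 := ℝ)
    (f := φ) (f' := φ') (s := uIcc u v) (C := M)
    (fun t ht => (hd t).hasDerivWithinAt) (fun t ht => hM t ht)
    (convex_uIcc u v) (left_mem_uIcc) (right_mem_uIcc)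
  simpa [Real.norm_eq_abs] using this

lemma abs_mem_uIcc {u v t : ℝ} (ht : t ∈ uIcc u v) : |t - u| ≤ |v - u| := by
  have e1 := le_abs_self (v-u)
  have e2 := neg_abs_le (v-u)
  rcases le_total u v with huv | huv
  · rw [uIcc_of_le huv] at ht
    rw [abs_sub_le_iff]; constructor <;> linarith [ht.1, ht.2, abs_nonneg (v-u)]
  · rw [uIcc_of_ge huv] at ht
    rw [abs_sub_le_iff]; constructor <;> linarith [ht.1, ht.2, abs_nonneg (v-u)]

/-- Second-order Taylor bound for a function with Lipschitz derivative. -/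
lemma taylor_bound {φ φ' : ℝ → ℝ} {L : ℝ}
    (hd : ∀ t, HasDerivAt φ (φ' t) t)
    (hlip : ∀ x y, |φ' x - φ' y| ≤ L * |x - y|) (u v : ℝ) :
    |φ v - φ u - (v-u) * φ' u| ≤ L * |v-u| * |v-u| := by
  have hL : 0 ≤ L := by
    have := hlip 1 0
    simp at this
    nlinarith [abs_nonneg (φ' 1 - φ' 0)]
  have hψ : ∀ t, HasDerivAt (fun t => φ t - t * φ' u) (φ' t - φ' u) t := by
    intro t
    exact ((hd t).sub ((hasDerivAt_id' t).mul_const (φ' u))).congr_deriv (by ring)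
  have hbd : ∀ t ∈ uIcc u v, |φ' t - φ' u| ≤ L * |v - u| := fun t ht =>
    (hlip t u).trans (mul_le_mul_of_nonneg_left (abs_mem_uIcc ht) hL)
  have := abs_sub_le_of_deriv hψ hbd
  calc |φ v - φ u - (v-u) * φ' u|
      = |(φ v - v * φ' u) - (φ u - u * φ' u)| := by ring_nf
    _ ≤ (L * |v-u|) * |v - u| := this
    _ = L * |v-u| * |v-u| := rfl

lemma sin_lip (x y : ℝ) : |Real.sin x - Real.sin y| ≤ |x - y| := by
  simpa using abs_sub_le_of_deriv (φ := Real.sin) (φ' := Real.cos) (M := 1)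
    (u := y) (v := x) (fun t => Real.hasDerivAt_sin t)
    (fun t _ => Real.abs_cos_le_one t)

lemma cos_lip (x y : ℝ) : |Real.cos x - Real.cos y| ≤ |x - y| := by
  have := abs_sub_le_of_deriv (φ := Real.cos) (φ' := fun t => -Real.sin t) (M := 1)
    (u := y) (v := x) (fun t => Real.hasDerivAt_cos t)
    (fun t _ => by simpa using Real.abs_sin_le_one t)
  simpa using this

lemma hasDerivAt_scaled_sin (a t : ℝ) :
    HasDerivAt (fun t => Real.sin (a*t)) (a * Real.cos (a*t)) t := by
  have h1 : HasDerivAt (fun t : ℝ => a * t) a t := by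
    simpa using (hasDerivAt_id t).const_mul a
  exact ((Real.hasDerivAt_sin (a*t)).comp t h1).congr_deriv (by ring)

lemma hasDerivAt_scaled_cos (a t : ℝ) :
    HasDerivAt (fun t => Real.cos (a*t)) (-(a * Real.sin (a*t))) t := by
  have h1 : HasDerivAt (fun t : ℝ => a * t) a t := by
    simpa using (hasDerivAt_id t).const_mul a
  exact ((Real.hasDerivAt_cos (a*t)).comp t h1).congr_deriv (by ring)

lemma sin_taylor (a : ℝ) (ha : 0 ≤ a) (u v : ℝ) :
    |Real.sin (a*v) - Real.sin (a*u) - (v-u) * (a * Real.cos (a*u))| ≤ a^2 * |v-u| * |v-u| := by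
  refine taylor_bound (φ' := fun t => a * Real.cos (a*t)) (hasDerivAt_scaled_sin a) ?_ u v
  intro x y
  rw [← mul_sub, abs_mul, abs_of_nonneg ha]
  calc a * |Real.cos (a*x) - Real.cos (a*y)| ≤ a * |a*x - a*y| :=
        mul_le_mul_of_nonneg_left (cos_lip _ _) ha
    _ = a^2 * |x - y| := by rw [← mul_sub, abs_mul, abs_of_nonneg ha]; ring

lemma cos_taylor (a : ℝ) (ha : 0 ≤ a) (u v : ℝ) :
    |Real.cos (a*v) - Real.cos (a*u) - (v-u) * (-(a * Real.sin (a*u)))| ≤ a^2 * |v-u| * |v-u| := by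
  refine taylor_bound (φ' := fun t => -(a * Real.sin (a*t))) (hasDerivAt_scaled_cos a) ?_ u v
  intro x y
  have : |-(a * Real.sin (a*x)) - -(a * Real.sin (a*y))| = a * |Real.sin (a*x) - Real.sin (a*y)| := by
    rw [show -(a * Real.sin (a*x)) - -(a * Real.sin (a*y)) = -(a * (Real.sin (a*x) - Real.sin (a*y))) by ring,
      abs_neg, abs_mul, abs_of_nonneg ha]
  rw [this]
  calc a * |Real.sin (a*x) - Real.sin (a*y)| ≤ a * |a*x - a*y| :=
        mul_le_mul_of_nonneg_left (sin_lip _ _) ha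
    _ = a^2 * |x - y| := by rw [← mul_sub, abs_mul, abs_of_nonneg ha]; ring

/-- A quadratic remainder bound implies differentiability. -/
lemma hasDerivAt_of_sq_bound {E : Type*} [NormedAddCommGroup E] [NormedSpace ℝ E]
    {F : ℝ → E} {L : E} {s K : ℝ}
    (h : ∀ v, ‖F v - F s - (v - s) • L‖ ≤ K * (|v-s| * |v-s|)) : HasDerivAt F L s := by
  rw [hasDerivAt_iff_isLittleO]
  have h1 : (fun v => F v - F s - (v - s) • L) =O[nhds s] fun v => (v-s)*(v-s) :=
    Asymptotics.IsBigO.of_bound K (by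
      filter_upwards with v
      simpa [abs_mul] using h v)
  refine h1.trans_isLittleO ?_
  have h2 : (fun v : ℝ => v - s) =o[nhds s] (fun _ => (1:ℝ)) := by
    rw [Asymptotics.isLittleO_one_iff]
    have : Filter.Tendsto (fun v : ℝ => v - s) (nhds s) (nhds (s - s)) :=
      (continuous_id.sub continuous_const).continuousAt
    simpa using this
  simpa using (Asymptotics.isBigO_refl (fun v : ℝ => v - s) (nhds s)).mul_isLittleO h2



variable {H : Type*} [NormedAddCommGroup H] [InnerProductSpace ℂ H] [CompleteSpace H]

-- spectrum lower bound from positivity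
lemma spec_lb (A : H →L[ℂ] H) (ω₁ : ℝ)
    (hpos : (A - ((ω₁ : ℂ)^2) • (1 : H →L[ℂ] H)).IsPositive) :
    ∀ x ∈ spectrum ℝ A, ω₁^2 ≤ x := by
  intro x hx
  have h1 := SpectrumRestricts.nnreal_iff.mp hpos.spectrumRestricts
  have h2 : A - ((ω₁ : ℂ)^2) • (1 : H →L[ℂ] H) = A - algebraMap ℝ (H →L[ℂ] H) (ω₁^2) := by
    rw [Algebra.algebraMap_eq_smul_one, ← algebraMap_smul ℂ (ω₁^2) (1 : H →L[ℂ] H)]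
    norm_num
  have h3 : x - ω₁^2 ∈ spectrum ℝ (A - algebraMap ℝ (H →L[ℂ] H) (ω₁^2)) := by
    rw [← spectrum.sub_singleton_eq]
    exact ⟨x, hx, ω₁^2, rfl, rfl⟩
  have := h1 (x - ω₁^2) (h2 ▸ h3)
  linarith

-- spectrum upper bound
lemma spec_ub (A : H →L[ℂ] H) : ∀ x ∈ spectrum ℝ A, x ≤ ‖A‖ := by
  rcases subsingleton_or_nontrivial H with hH | hH
  · intro x hx
    exfalso
    have : IsUnit (algebraMap ℝ (H →L[ℂ] H) x - A) := by
      have : Subsingleton (H →L[ℂ] H) := inferInstance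
      exact isUnit_of_subsingleton _
    exact hx this
  · intro x hx
    exact (le_abs_self x).trans (spectrum.norm_le_norm_of_mem (𝕜 := ℝ) hx)


variable {H : Type*} [NormedAddCommGroup H] [InnerProductSpace ℂ H] [CompleteSpace H]

noncomputable def OpS (A : H →L[ℂ] H) (s : ℝ) : H →L[ℂ] H :=
  cfc (fun x : ℝ => Real.sin (Real.sqrt x * s) / Real.sqrt x) A

noncomputable def OpC (A : H →L[ℂ] H) (s : ℝ) : H →L[ℂ] H :=
  cfc (fun x : ℝ => Real.cos (Real.sqrt x * s)) A

variable {A : H →L[ℂ] H} {ω₁ : ℝ}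

section
variable (hω₁ : 0 < ω₁) (hsp : ∀ x ∈ spectrum ℝ A, ω₁^2 ≤ x)
include hω₁ hsp

lemma sqrt_facts {x : ℝ} (hx : x ∈ spectrum ℝ A) :
    ω₁ ≤ Real.sqrt x ∧ Real.sqrt x ≤ Real.sqrt ‖A‖ ∧ 0 < x := by
  have h1 := hsp x hx
  have h2 : x ≤ ‖A‖ := spec_ub A x hx
  have h3 : 0 < x := lt_of_lt_of_le (by positivity) h1
  refine ⟨?_, Real.sqrt_le_sqrt h2, h3⟩
  have := Real.sqrt_le_sqrt h1
  rwa [Real.sqrt_sq hω₁.le] at this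

lemma contOn_g (s : ℝ) :
    ContinuousOn (fun x : ℝ => Real.sin (Real.sqrt x * s) / Real.sqrt x) (spectrum ℝ A) := by
  apply ContinuousOn.div
  · exact (Real.continuous_sin.comp (Real.continuous_sqrt.mul continuous_const)).continuousOn
  · exact Real.continuous_sqrt.continuousOn
  · intro x hx
    have := (sqrt_facts hω₁ hsp hx).1
    have : (0:ℝ) < Real.sqrt x := lt_of_lt_of_le hω₁ this
    exact ne_of_gt this

lemma norm_OpS_le (s : ℝ) : ‖OpS A s‖ ≤ ω₁⁻¹ := by
  apply norm_cfc_le (by positivity)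
  intro x hx
  obtain ⟨h1, h2, h3⟩ := sqrt_facts hω₁ hsp hx
  have hs : (0:ℝ) < Real.sqrt x := lt_of_lt_of_le hω₁ h1
  rw [Real.norm_eq_abs, abs_div, abs_of_pos hs]
  calc |Real.sin (Real.sqrt x * s)| / Real.sqrt x ≤ 1 / Real.sqrt x := by
        gcongr
        exact Real.abs_sin_le_one _
    _ ≤ 1 / ω₁ := by apply one_div_le_one_div_of_le hω₁ h1
    _ = ω₁⁻¹ := one_div ω₁

omit hω₁ hsp in
lemma norm_OpC_le (s : ℝ) : ‖OpC A s‖ ≤ 1 := by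
  apply norm_cfc_le zero_le_one
  intro x hx
  exact (Real.abs_cos_le_one _).trans le_rfl

end

lemma OpS_zero : OpS A 0 = 0 := by
  have : (fun x : ℝ => Real.sin (Real.sqrt x * 0) / Real.sqrt x) = fun _ : ℝ => (0:ℝ) := by
    funext x; simp
  rw [OpS, this]
  simpa using cfc_zero ℝ (a := A)

lemma OpC_zero (hA : IsSelfAdjoint A) : OpC A 0 = 1 := by
  have : (fun x : ℝ => Real.cos (Real.sqrt x * 0)) = fun _ : ℝ => (1:ℝ) := by
    funext x; simp
  rw [OpC, this]
  exact cfc_one ℝ (a := A) hA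


section
variable (hA : IsSelfAdjoint A) (hω₁ : 0 < ω₁) (hsp : ∀ x ∈ spectrum ℝ A, ω₁^2 ≤ x)
include hA hω₁ hsp

lemma AS_eq (s : ℝ) :
    A * OpS A s = cfc (fun x : ℝ => Real.sqrt x * Real.sin (Real.sqrt x * s)) A := by
  have h := cfc_mul (fun x : ℝ => x) (fun x : ℝ => Real.sin (Real.sqrt x * s) / Real.sqrt x)
    A continuousOn_id (contOn_g hω₁ hsp s)
  rw [show (cfc (fun x : ℝ => x) A) = A from cfc_id ℝ A hA] at h
  rw [OpS, ← h]
  apply cfc_congr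
  intro x hx
  obtain ⟨h1, -, h3⟩ := sqrt_facts hω₁ hsp hx
  have hs : Real.sqrt x ≠ 0 := by positivity
  have hxx : Real.sqrt x * Real.sqrt x = x := Real.mul_self_sqrt h3.le
  show x * (Real.sin (Real.sqrt x * s) / Real.sqrt x) = Real.sqrt x * Real.sin (Real.sqrt x * s)
  calc x * (Real.sin (Real.sqrt x * s) / Real.sqrt x)
      = Real.sqrt x * Real.sqrt x * (Real.sin (Real.sqrt x * s) / Real.sqrt x) := by rw [hxx]
    _ = Real.sqrt x * (Real.sin (Real.sqrt x * s) / Real.sqrt x * Real.sqrt x) := by ring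
    _ = Real.sqrt x * Real.sin (Real.sqrt x * s) := by rw [div_mul_cancel₀ _ hs]

lemma hasDerivAt_OpS (s : ℝ) : HasDerivAt (OpS A) (OpC A s) s := by
  apply hasDerivAt_of_sq_bound (K := Real.sqrt ‖A‖)
  intro v
  have contc : ContinuousOn (fun x : ℝ => Real.cos (Real.sqrt x * s)) (spectrum ℝ A) := by
    apply Continuous.continuousOn
    exact Real.continuous_cos.comp (Real.continuous_sqrt.mul continuous_const)
  have hcomb : OpS A v - OpS A s - (v - s) • OpC A s =
      cfc (fun x : ℝ => (Real.sin (Real.sqrt x * v) / Real.sqrt x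
        - Real.sin (Real.sqrt x * s) / Real.sqrt x)
        - (v - s) • Real.cos (Real.sqrt x * s)) A := by
    rw [cfc_sub (fun x : ℝ => Real.sin (Real.sqrt x * v) / Real.sqrt x
          - Real.sin (Real.sqrt x * s) / Real.sqrt x)
        (fun x : ℝ => (v - s) • Real.cos (Real.sqrt x * s)) A
        ((contOn_g hω₁ hsp v).sub (contOn_g hω₁ hsp s)) (by exact contc.const_smul (v - s)),
      cfc_sub (fun x : ℝ => Real.sin (Real.sqrt x * v) / Real.sqrt x)
        (fun x : ℝ => Real.sin (Real.sqrt x * s) / Real.sqrt x) A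
        (contOn_g hω₁ hsp v) (contOn_g hω₁ hsp s),
      cfc_smul (v - s) (fun x : ℝ => Real.cos (Real.sqrt x * s)) A contc]
    rfl
  rw [hcomb]
  apply norm_cfc_le (by positivity)
  intro x hx
  obtain ⟨h1, h2, h3⟩ := sqrt_facts hω₁ hsp hx
  set a := Real.sqrt x with ha
  have hap : (0:ℝ) < a := lt_of_lt_of_le hω₁ h1
  have key := sin_taylor a hap.le s v
  have heq : Real.sin (a * v) / a - Real.sin (a * s) / a - (v - s) • Real.cos (a * s)
      = (Real.sin (a*v) - Real.sin (a*s) - (v-s) * (a * Real.cos (a*s))) / a := by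
    field_simp
    ring
  rw [Real.norm_eq_abs, heq, abs_div, abs_of_pos hap]
  rw [div_le_iff₀ hap]
  calc |Real.sin (a*v) - Real.sin (a*s) - (v-s) * (a * Real.cos (a*s))|
      ≤ a^2 * |v-s| * |v-s| := key
    _ = (a * (|v-s| * |v-s|)) * a := by ring
    _ ≤ (Real.sqrt ‖A‖ * (|v-s| * |v-s|)) * a := by
        apply mul_le_mul_of_nonneg_right _ hap.le
        apply mul_le_mul_of_nonneg_right h2 (by positivity)

lemma hasDerivAt_OpC (s : ℝ) : HasDerivAt (OpC A) (-(A * OpS A s)) s := by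
  have hASc : -(A * OpS A s) =
      cfc (fun x : ℝ => -(Real.sqrt x * Real.sin (Real.sqrt x * s))) A := by
    rw [AS_eq hA hω₁ hsp s, ← cfc_neg]
  rw [hASc]
  apply hasDerivAt_of_sq_bound (K := ‖A‖)
  intro v
  have contc : ∀ w : ℝ, ContinuousOn (fun x : ℝ => Real.cos (Real.sqrt x * w)) (spectrum ℝ A) :=
    fun w => (Real.continuous_cos.comp (Real.continuous_sqrt.mul continuous_const)).continuousOn
  have contn : ContinuousOn (fun x : ℝ => -(Real.sqrt x * Real.sin (Real.sqrt x * s))) (spectrum ℝ A) :=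
    ((Real.continuous_sqrt.mul (Real.continuous_sin.comp (Real.continuous_sqrt.mul continuous_const))).neg).continuousOn
  have hcomb : OpC A v - OpC A s - (v - s) • cfc (fun x : ℝ => -(Real.sqrt x * Real.sin (Real.sqrt x * s))) A =
      cfc (fun x : ℝ => (Real.cos (Real.sqrt x * v) - Real.cos (Real.sqrt x * s))
        - (v - s) • (-(Real.sqrt x * Real.sin (Real.sqrt x * s)))) A := by
    rw [cfc_sub (fun x : ℝ => Real.cos (Real.sqrt x * v) - Real.cos (Real.sqrt x * s))
        (fun x : ℝ => (v - s) • (-(Real.sqrt x * Real.sin (Real.sqrt x * s)))) A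
        ((contc v).sub (contc s)) (by exact contn.const_smul (v - s)),
      cfc_sub (fun x : ℝ => Real.cos (Real.sqrt x * v))
        (fun x : ℝ => Real.cos (Real.sqrt x * s)) A (contc v) (contc s),
      cfc_smul (v - s) (fun x : ℝ => -(Real.sqrt x * Real.sin (Real.sqrt x * s))) A contn]
    rfl
  rw [hcomb]
  apply norm_cfc_le (by positivity)
  intro x hx
  obtain ⟨h1, h2, h3⟩ := sqrt_facts hω₁ hsp hx
  set a := Real.sqrt x with ha
  have hap : (0:ℝ) < a := lt_of_lt_of_le hω₁ h1
  have key := cos_taylor a hap.le s v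
  have hax : a^2 = x := Real.sq_sqrt h3.le
  have hxA : x ≤ ‖A‖ := by
    have := Real.sqrt_le_sqrt (le_refl x)
    nlinarith [h2, Real.sqrt_nonneg x, Real.sq_sqrt h3.le, Real.sq_sqrt (norm_nonneg A),
      Real.sqrt_nonneg ‖A‖]
  rw [Real.norm_eq_abs]
  calc |Real.cos (a * v) - Real.cos (a * s) - (v - s) • -(a * Real.sin (a * s))|
      = |Real.cos (a*v) - Real.cos (a*s) - (v-s) * (-(a * Real.sin (a*s)))| := by norm_num
    _ ≤ a^2 * |v-s| * |v-s| := key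
    _ = x * (|v-s| * |v-s|) := by rw [hax]; ring
    _ ≤ ‖A‖ * (|v-s| * |v-s|) := by
        apply mul_le_mul_of_nonneg_right hxA (by positivity)

end


section Integral

variable (hA : IsSelfAdjoint A) (hω₁ : 0 < ω₁) (hsp : ∀ x ∈ spectrum ℝ A, ω₁^2 ≤ x)
include hA hω₁ hsp

lemma contOpS : Continuous (OpS A) :=
  Differentiable.continuous (fun t => (hasDerivAt_OpS hA hω₁ hsp t).differentiableAt)

lemma contOpC : Continuous (OpC A) :=
  Differentiable.continuous (fun t => (hasDerivAt_OpC hA hω₁ hsp t).differentiableAt)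

omit hA hω₁ hsp in
lemma hcs_transfer (φ : ℝ → H) (hφs : HasCompactSupport φ) (x : ℝ) :
    HasCompactSupport (fun s => OpS A s (φ (s + x))) := by
  have h1 : HasCompactSupport (fun s => φ (s + x)) :=
    hφs.comp_homeomorph (Homeomorph.addRight x)
  apply h1.mono
  intro s hs
  simp only [Function.mem_support] at hs ⊢
  intro h0
  exact hs (by rw [h0, map_zero])

lemma key (φ φ' : ℝ → H) (hφd : ∀ x, HasDerivAt φ (φ' x) x) (hφc : Continuous φ)
    (hφs : HasCompactSupport φ) (hφ'c : Continuous φ') (hφ's : HasCompactSupport φ') (t₀ : ℝ) :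
    HasDerivAt (fun t => ∫ s in Ici (0:ℝ), OpS A s (φ (s + t)))
      (∫ s in Ici (0:ℝ), OpS A s (φ' (s + t₀))) t₀ := by
  obtain ⟨R, hRsupp⟩ := (hφ's.isBounded).subset_closedBall 0
  rw [Real.closedBall_eq_Icc, zero_sub, zero_add] at hRsupp
  obtain ⟨K, hK⟩ := hφ'c.bounded_above_of_compact_support hφ's
  have hK0 : 0 ≤ K := le_trans (norm_nonneg _) (hK 0)
  set bound : ℝ → ℝ := (Icc (-(R+|t₀|+1)) (R+|t₀|+1)).indicator (fun _ => ω₁⁻¹ * K) with hbd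
  have cont_inner : ∀ (ψ : ℝ → H), Continuous ψ → ∀ x : ℝ,
      Continuous fun s => OpS A s (ψ (s + x)) := by
    intro ψ hψ x
    have hadd : Continuous fun s : ℝ => s + x := continuous_id.add continuous_const
    exact (contOpS hA hω₁ hsp).clm_apply (hψ.comp hadd)
  refine (hasDerivAt_integral_of_dominated_loc_of_deriv_le (𝕜 := ℝ) (s := Metric.ball t₀ 1) (bound := bound)
    (F := fun t s => OpS A s (φ (s + t))) (F' := fun t s => OpS A s (φ' (s + t)))
    (μ := volume.restrict (Ici (0:ℝ))) (x₀ := t₀) (Metric.ball_mem_nhds t₀ one_pos)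
    ?_ ?_ ?_ ?_ ?_ ?_).2
  · exact Filter.Eventually.of_forall fun x =>
      (cont_inner φ hφc x).aestronglyMeasurable
  · exact ((cont_inner φ hφc t₀).integrable_of_hasCompactSupport
      (hcs_transfer φ hφs t₀)).restrict
  · exact (cont_inner φ' hφ'c t₀).aestronglyMeasurable
  · refine Filter.Eventually.of_forall fun s => fun x hx => ?_
    rw [Metric.mem_ball, Real.dist_eq] at hx
    by_cases hmem : s ∈ Icc (-(R+|t₀|+1)) (R+|t₀|+1)
    · rw [hbd, indicator_of_mem hmem]
      calc ‖OpS A s (φ' (s+x))‖ ≤ ‖OpS A s‖ * ‖φ' (s+x)‖ := (OpS A s).le_opNorm _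
        _ ≤ ω₁⁻¹ * K := mul_le_mul (norm_OpS_le hω₁ hsp s) (hK _) (norm_nonneg _)
            (by positivity)
    · rw [hbd, indicator_of_notMem hmem]
      have hzero : φ' (s + x) = 0 := by
        apply image_eq_zero_of_notMem_tsupport
        intro hmem2
        apply hmem
        have h2 := hRsupp hmem2
        rw [mem_Icc] at h2 ⊢
        have ha1 := abs_lt.mp hx
        have ha2 := le_abs_self t₀
        have ha3 := neg_abs_le t₀
        constructor <;> linarith [h2.1, h2.2]
      simp [hzero]
  · rw [hbd]
    apply Integrable.restrict
    rw [integrable_indicator_iff measurableSet_Icc]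
    exact integrableOn_const measure_Icc_lt_top.ne
  · refine Filter.Eventually.of_forall fun s => fun x hx => ?_
    have h1 : HasDerivAt (fun x => φ (s + x)) (φ' (s + x)) x := by
      have h2 : HasDerivAt (fun x : ℝ => s + x) 1 x := by
        simpa using (hasDerivAt_id x).const_add s
      exact ((hφd (s+x)).scomp x h2).congr_deriv (one_smul ℝ _)
    have := ((OpS A s).restrictScalars ℝ).hasFDerivAt.comp_hasDerivAt x h1
    exact this

lemma key_cont (φ : ℝ → H) (hφc : Continuous φ) (hφs : HasCompactSupport φ) :
    Continuous fun t => ∫ s in Ici (0:ℝ), OpS A s (φ (s + t)) := by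
  rw [continuous_iff_continuousAt]
  intro t₀
  obtain ⟨R, hRsupp⟩ := (hφs.isBounded).subset_closedBall 0
  rw [Real.closedBall_eq_Icc, zero_sub, zero_add] at hRsupp
  obtain ⟨K, hK⟩ := hφc.bounded_above_of_compact_support hφs
  set bound : ℝ → ℝ := (Icc (-(R+|t₀|+1)) (R+|t₀|+1)).indicator (fun _ => ω₁⁻¹ * K) with hbd
  refine continuousAt_of_dominated (bound := bound)
    (F := fun t s => OpS A s (φ (s + t))) (μ := volume.restrict (Ici (0:ℝ))) (x₀ := t₀)
    ?_ ?_ ?_ ?_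
  · refine Filter.Eventually.of_forall fun x => ?_
    have hadd : Continuous fun s : ℝ => s + x := continuous_id.add continuous_const
    exact (((contOpS hA hω₁ hsp).clm_apply (hφc.comp hadd))).aestronglyMeasurable
  · refine Filter.eventually_of_mem (Metric.ball_mem_nhds t₀ one_pos) fun x hx => ?_
    refine Filter.Eventually.of_forall fun s => ?_
    rw [Metric.mem_ball, Real.dist_eq] at hx
    by_cases hmem : s ∈ Icc (-(R+|t₀|+1)) (R+|t₀|+1)
    · rw [hbd, indicator_of_mem hmem]
      calc ‖OpS A s (φ (s+x))‖ ≤ ‖OpS A s‖ * ‖φ (s+x)‖ := (OpS A s).le_opNorm _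
        _ ≤ ω₁⁻¹ * K := mul_le_mul (norm_OpS_le hω₁ hsp s) (hK _) (norm_nonneg _)
            (by positivity)
    · rw [hbd, indicator_of_notMem hmem]
      have hzero : φ (s + x) = 0 := by
        apply image_eq_zero_of_notMem_tsupport
        intro hmem2
        apply hmem
        have h2 := hRsupp hmem2
        rw [mem_Icc] at h2 ⊢
        have ha1 := abs_lt.mp hx
        have ha2 := le_abs_self t₀
        have ha3 := neg_abs_le t₀
        constructor <;> linarith [h2.1, h2.2]
      simp [hzero]
  · rw [hbd]
    apply Integrable.restrict
    rw [integrable_indicator_iff measurableSet_Icc]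
    exact integrableOn_const measure_Icc_lt_top.ne
  · refine Filter.Eventually.of_forall fun s => ?_
    have hadd : Continuous fun x : ℝ => s + x := continuous_const.add continuous_id
    exact (((OpS A s).continuous.comp (hφc.comp hadd))).continuousAt

end Integral

end Stmt9Aux

open Stmt9Aux in
/-- The retarded solution `u(t) = ∫_t^∞ (sin(√A(t'-t))/√A) f(t') dt'` of the
inhomogeneous abstract Klein–Gordon equation: it is C², solves `u'' + A u = f`,
and vanishes for `t` beyond the support of `f`. -/
theorem stmt9 {H : Type*} [NormedAddCommGroup H] [InnerProductSpace ℂ H]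
    [CompleteSpace H] (A : H →L[ℂ] H) (hA : IsSelfAdjoint A) (ω₁ : ℝ)
    (hω₁ : 0 < ω₁) (hpos : (A - ((ω₁ : ℂ)^2) • (1 : H →L[ℂ] H)).IsPositive)
    (f : ℝ → H) (hf : ContDiff ℝ 2 f) (hsupp : HasCompactSupport f) :
    ∀ u : ℝ → H,
      (u = fun t => ∫ t' in Ici t,
        (cfc (fun x : ℝ => Real.sin (Real.sqrt x * (t' - t)) / Real.sqrt x) A) (f t')) →
      ContDiff ℝ 2 u ∧
      (∀ t : ℝ, deriv (deriv u) t + A (u t) = f t) ∧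
      (∀ t : ℝ, (∀ s, f s ≠ 0 → s < t) → u t = 0) := by
  intro u hu
  have hsp : ∀ x ∈ spectrum ℝ A, ω₁ ^ 2 ≤ x := spec_lb A ω₁ hpos
  -- derivatives of f
  have h21 : (2 : WithTop ℕ∞) = 1 + 1 := by norm_num
  have hf' : ContDiff ℝ 1 (deriv f) := by
    rw [h21, contDiff_succ_iff_deriv] at hf; exact hf.2.2
  set f1 := deriv f with hf1def
  set f2 := deriv f1 with hf2def
  have hfd : ∀ t, HasDerivAt f (f1 t) t := fun t =>
    ((hf.differentiable (by norm_num)) t).hasDerivAt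
  have hf1d : ∀ t, HasDerivAt f1 (f2 t) t := fun t =>
    ((hf'.differentiable (by norm_num)) t).hasDerivAt
  have hfc : Continuous f := hf.continuous
  have hf1c : Continuous f1 := hf'.continuous
  have hf2c : Continuous f2 := (contDiff_one_iff_deriv.mp hf').2
  have hs1 : HasCompactSupport f1 := hsupp.deriv
  have hs2 : HasCompactSupport f2 := hs1.deriv
  -- change of variables
  have huw : u = fun t => ∫ s in Ici (0:ℝ), OpS A s (f (s + t)) := by
    rw [hu]; funext t
    calc ∫ t' in Ici t, (cfc (fun x : ℝ => Real.sin (Real.sqrt x * (t' - t)) / Real.sqrt x) A) (f t')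
        = ∫ t' in Ici t, OpS A (t' - t) (f t') := rfl
      _ = ∫ t' in Ici t, OpS A (t' - t) (f t') ∂(Measure.map (· + t) volume) := by
          rw [map_add_right_eq_self]
      _ = ∫ s in (· + t) ⁻¹' (Ici t), OpS A (s + t - t) (f (s + t)) :=
          (measurableEmbedding_addRight t).setIntegral_map
            (fun t' => OpS A (t' - t) (f t')) (Ici t)
      _ = ∫ s in Ici (0:ℝ), OpS A s (f (s + t)) := by
          have hpre : (· + t) ⁻¹' (Ici t) = Ici (0:ℝ) := by
            ext z; simp [le_add_iff_nonneg_left]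
          rw [hpre]
          simp only [add_sub_cancel_right]
  -- derivatives of w
  have hw1 : ∀ t, HasDerivAt (fun t => ∫ s in Ici (0:ℝ), OpS A s (f (s + t)))
      (∫ s in Ici (0:ℝ), OpS A s (f1 (s + t))) t := fun t =>
    key hA hω₁ hsp f f1 hfd hfc hsupp hf1c hs1 t
  have hw2 : ∀ t, HasDerivAt (fun t => ∫ s in Ici (0:ℝ), OpS A s (f1 (s + t)))
      (∫ s in Ici (0:ℝ), OpS A s (f2 (s + t))) t := fun t =>
    key hA hω₁ hsp f1 f2 hf1d hf1c hs1 hf2c hs2 t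
  have hw2c : Continuous (fun t => ∫ s in Ici (0:ℝ), OpS A s (f2 (s + t))) :=
    key_cont hA hω₁ hsp f2 hf2c hs2
  have hdw : deriv (fun t => ∫ s in Ici (0:ℝ), OpS A s (f (s + t)))
      = fun t => ∫ s in Ici (0:ℝ), OpS A s (f1 (s + t)) := funext fun t => (hw1 t).deriv
  have hdw1 : deriv (fun t => ∫ s in Ici (0:ℝ), OpS A s (f1 (s + t)))
      = fun t => ∫ s in Ici (0:ℝ), OpS A s (f2 (s + t)) := funext fun t => (hw2 t).deriv
  -- support radius
  obtain ⟨R₀, hR₀⟩ := hsupp.isBounded.subset_closedBall 0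
  set R := max R₀ 0 with hRdef
  have hR : tsupport f ⊆ Icc (-R) R := by
    refine hR₀.trans ?_
    rw [Real.closedBall_eq_Icc, zero_sub, zero_add]
    exact Icc_subset_Icc (neg_le_neg (le_max_left _ _)) (le_max_left _ _)
  have hR1 : tsupport f1 ⊆ Icc (-R) R :=
    (closure_minimal support_deriv_subset (isClosed_tsupport f)).trans hR
  have hR2 : tsupport f2 ⊆ Icc (-R) R :=
    ((closure_minimal support_deriv_subset (isClosed_tsupport f1)).trans hR1)
  have hR0 : (0:ℝ) ≤ R := le_max_right _ _
  -- the ODE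
  have hode : ∀ t, (∫ s in Ici (0:ℝ), OpS A s (f2 (s + t)))
      + A (∫ s in Ici (0:ℝ), OpS A s (f (s + t))) = f t := by
    intro t
    set M := R + |t| + 1 with hMdef
    have hM0 : (0:ℝ) < M := by positivity
    have vanish : ∀ (ψ : ℝ → H), tsupport ψ ⊆ Icc (-R) R → ∀ s, M ≤ s → ψ (s + t) = 0 := by
      intro ψ hψ s hs
      apply image_eq_zero_of_notMem_tsupport
      intro hmem
      have h2 := (hψ hmem).2
      have h3 := neg_abs_le t
      rw [hMdef] at hs
      linarith
    have cutoff : ∀ (ψ : ℝ → H), tsupport ψ ⊆ Icc (-R) R →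
        (∫ s in Ici (0:ℝ), OpS A s (ψ (s + t))) = ∫ s in (0:ℝ)..M, OpS A s (ψ (s + t)) := by
      intro ψ hψ
      rw [intervalIntegral.integral_of_le hM0.le]
      refine setIntegral_eq_of_subset_of_ae_diff_eq_zero measurableSet_Ici.nullMeasurableSet
        (Ioc_subset_Icc_self.trans Icc_subset_Ici_self) ?_
      have h0 : ∀ᵐ x : ℝ ∂volume, x ≠ 0 := by
        rw [ae_iff]
        simp only [ne_eq, not_not, setOf_eq_eq_singleton]
        exact measure_singleton 0
      filter_upwards [h0] with x hx0 hxmem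
      obtain ⟨hx1, hx2⟩ := hxmem
      have hxpos : 0 < x := lt_of_le_of_ne hx1 (Ne.symm hx0)
      have hxM : M ≤ x := by
        by_contra hle; push_neg at hle; exact hx2 ⟨hxpos, hle.le⟩
      rw [vanish ψ hψ x hxM, map_zero]
    have haddc : Continuous fun s : ℝ => s + t := continuous_id.add continuous_const
    have hcont1 : Continuous fun s => OpS A s (f2 (s + t)) :=
      (contOpS hA hω₁ hsp).clm_apply (hf2c.comp haddc)
    have hcont2 : Continuous fun s => A (OpS A s (f (s + t))) :=
      A.continuous.comp ((contOpS hA hω₁ hsp).clm_apply (hfc.comp haddc))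
    have hcont2' : Continuous fun s => OpS A s (f (s + t)) :=
      (contOpS hA hω₁ hsp).clm_apply (hfc.comp haddc)
    have hint1 : IntervalIntegrable (fun s => OpS A s (f2 (s + t))) volume 0 M :=
      hcont1.intervalIntegrable 0 M
    have hint2 : IntervalIntegrable (fun s => A (OpS A s (f (s + t)))) volume 0 M :=
      hcont2.intervalIntegrable 0 M
    have hint2' : IntervalIntegrable (fun s => OpS A s (f (s + t))) volume 0 M :=
      hcont2'.intervalIntegrable 0 M
    -- FTC
    have hder : ∀ s ∈ uIcc (0:ℝ) M,
        HasDerivAt (fun s => OpS A s (f1 (s+t)) - OpC A s (f (s+t)))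
          (OpS A s (f2 (s+t)) + A (OpS A s (f (s+t)))) s := by
      intro s _
      have hadd : HasDerivAt (fun s : ℝ => s + t) 1 s := (hasDerivAt_id s).add_const t
      have hif : HasDerivAt (fun s => f (s+t)) (f1 (s+t)) s := by
        exact ((hfd (s+t)).scomp s hadd).congr_deriv (one_smul ℝ _)
      have hif1 : HasDerivAt (fun s => f1 (s+t)) (f2 (s+t)) s := by
        exact ((hf1d (s+t)).scomp s hadd).congr_deriv (one_smul ℝ _)
      have hS' : HasDerivAt (fun s => (OpS A s).restrictScalars ℝ)
          ((OpC A s).restrictScalars ℝ) s := by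
        have := (ContinuousLinearMap.restrictScalarsL ℂ H H ℝ ℝ).hasFDerivAt.comp_hasDerivAt s
          (hasDerivAt_OpS hA hω₁ hsp s)
        exact this
      have hC' : HasDerivAt (fun s => (OpC A s).restrictScalars ℝ)
          ((-(A * OpS A s)).restrictScalars ℝ) s := by
        have := (ContinuousLinearMap.restrictScalarsL ℂ H H ℝ ℝ).hasFDerivAt.comp_hasDerivAt s
          (hasDerivAt_OpC hA hω₁ hsp s)
        exact this
      have d1 := hS'.clm_apply hif1
      have d2 := hC'.clm_apply hif
      have d3 := d1.sub d2
      convert d3 using 1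
      show _ = (OpC A s) (f1 (s + t)) + (OpS A s) (f2 (s + t)) - ((-(A * OpS A s)) (f (s + t)) + (OpC A s) (f1 (s + t)))
      simp only [ContinuousLinearMap.coe_restrictScalars', ContinuousLinearMap.neg_apply,
        ContinuousLinearMap.mul_apply]
      abel
      rfl
    have hFTC := intervalIntegral.integral_eq_sub_of_hasDerivAt hder (hint1.add hint2)
    have hM1 : f1 (M + t) = 0 := vanish f1 hR1 M le_rfl
    have hM2 : f (M + t) = 0 := vanish f hR M le_rfl
    have hend : (∫ s in (0:ℝ)..M, (OpS A s (f2 (s+t)) + A (OpS A s (f (s+t))))) = f t := by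
      rw [hFTC, hM1, hM2]
      simp [OpS_zero, OpC_zero hA, zero_add]
    rw [cutoff f2 hR2, cutoff f hR, ← A.intervalIntegral_comp_comm hint2',
      ← intervalIntegral.integral_add hint1 hint2]
    exact hend
  refine ⟨?_, ?_, ?_⟩
  · rw [huw, h21, contDiff_succ_iff_deriv]
    refine ⟨fun t => (hw1 t).differentiableAt, by norm_num, ?_⟩
    rw [hdw, contDiff_one_iff_deriv]
    exact ⟨fun t => (hw2 t).differentiableAt, by rw [hdw1]; exact hw2c⟩
  · intro t
    have e1 : deriv (deriv u) = fun t => ∫ s in Ici (0:ℝ), OpS A s (f2 (s + t)) := by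
      rw [huw, hdw, hdw1]
    rw [e1, huw]
    exact hode t
  · intro t ht
    rw [hu]
    apply setIntegral_eq_zero_of_forall_eq_zero
    intro x hx
    have hfx : f x = 0 := by
      by_contra h
      exact absurd (ht x h) (not_lt.mpr hx)
    rw [hfx, map_zero]
end

section
/- Consider the Sturm–Liouville eigenvalue problem -φ'' + m²φ = ω²φ on (0,ℓ) with φ(0) = 0 and the λ-dependent boundary condition -(β₁ φ(ℓ) - β₂ φ'(ℓ)) = ω²(β₁' φ(ℓ) - β₂' φ'(ℓ)). Suppose ρ := β₁'β₂ - β₁β₂' > 0, m² ≥ 0, β₂' > 0, β₁ ≥ 0, β₂ < 0, β₁' < 0. If φ is a nonzero solution with eigenvalue λ = ω², then λ > 0. -/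
open Set MeasureTheory intervalIntegral

/-- If a continuous nonnegative function is positive at some point of `[a,b]`,
its integral over `a..b` is positive. -/
lemma my_integral_pos {f : ℝ → ℝ} {a b c : ℝ} (hab : a < b) (hf : Continuous f)
    (h0 : ∀ x, 0 ≤ f x) (hc : c ∈ Icc a b) (hfc : 0 < f c) :
    0 < ∫ x in a..b, f x := by
  obtain ⟨δ, hδ, hball⟩ := Metric.continuousAt_iff.mp hf.continuousAt (ε := f c) hfc
  obtain ⟨hca, hcb⟩ := hc
  set a' := max a (c - δ/2) with ha'
  set b' := min b (c + δ/2) with hb'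
  have haa' : a ≤ a' := le_max_left _ _
  have hb'b : b' ≤ b := min_le_left _ _
  have ha'b' : a' < b' := by
    simp only [ha', hb', max_lt_iff, lt_min_iff]
    refine ⟨⟨hab, ?_⟩, ⟨?_, ?_⟩⟩ <;> linarith
  have hpos : ∀ x ∈ Ioo a' b', 0 < f x := by
    intro x hx
    have h1 : c - δ/2 ≤ x := le_trans (le_max_right _ _) hx.1.le
    have h2 : x ≤ c + δ/2 := le_trans hx.2.le (min_le_right _ _)
    have hdist : dist x c < δ := by
      rw [Real.dist_eq, abs_lt]; constructor <;> linarith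
    have := hball hdist
    rw [Real.dist_eq, abs_lt] at this
    linarith [this.1]
  have hint : ∀ u v : ℝ, IntervalIntegrable f volume u v := fun u v =>
    hf.intervalIntegrable u v
  have h1 : (0:ℝ) ≤ ∫ x in a..a', f x := integral_nonneg haa' (fun u _ => h0 u)
  have h2 : (0:ℝ) < ∫ x in a'..b', f x :=
    intervalIntegral_pos_of_pos_on (hint a' b') hpos ha'b'
  have h3 : (0:ℝ) ≤ ∫ x in b'..b, f x := integral_nonneg hb'b (fun u _ => h0 u)
  have e1 : (∫ x in a..a', f x) + (∫ x in a'..b', f x) = ∫ x in a..b', f x :=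
    integral_add_adjacent_intervals (hint a a') (hint a' b')
  have e2 : (∫ x in a..b', f x) + (∫ x in b'..b, f x) = ∫ x in a..b, f x :=
    integral_add_adjacent_intervals (hint a b') (hint b' b)
  linarith

/-- Positivity of eigenvalues of the Sturm–Liouville problem with an
eigenvalue-dependent (dynamical) boundary condition at `z = ℓ` and a Dirichlet
condition at `z = 0`, under the sign conditions of Proposition 1. -/
theorem stmt11 (ℓ msq β₁ β₂ β₁' β₂' lam : ℝ) (hℓ : 0 < ℓ)
    (hρ : 0 < β₁' * β₂ - β₁ * β₂') (hmsq : 0 ≤ msq)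
    (hβ₂' : 0 < β₂') (hβ₁ : 0 ≤ β₁) (hβ₂ : β₂ < 0) (hβ₁' : β₁' < 0)
    (φ : ℝ → ℝ) (hφ : ContDiff ℝ 2 φ)
    (hODE : ∀ z ∈ Ioo (0:ℝ) ℓ, -(deriv (deriv φ) z) + msq * φ z = lam * φ z)
    (h0 : φ 0 = 0)
    (hbc : -(β₁ * φ ℓ - β₂ * deriv φ ℓ) = lam * (β₁' * φ ℓ - β₂' * deriv φ ℓ))
    (hne : ∃ z ∈ Icc (0:ℝ) ℓ, φ z ≠ 0) :
    0 < lam := by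
  -- regularity facts
  have h21 : (2:WithTop ℕ∞) = 1 + 1 := by norm_num
  have hd1 : Differentiable ℝ φ := hφ.differentiable (by norm_num)
  have hφ' : ContDiff ℝ 1 (deriv φ) := by
    rw [h21, contDiff_succ_iff_deriv] at hφ
    exact hφ.2.2
  have hd2 : Differentiable ℝ (deriv φ) := hφ'.differentiable one_ne_zero
  have hcφ : Continuous φ := hd1.continuous
  have hcφ' : Continuous (deriv φ) := hd2.continuous
  have hcφ'' : Continuous (deriv (deriv φ)) := (contDiff_one_iff_deriv.mp hφ').2
  set I2 := ∫ z in (0:ℝ)..ℓ, (φ z)^2 with hI2def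
  set I1 := ∫ z in (0:ℝ)..ℓ, (deriv φ z)^2 with hI1def
  -- integration by parts
  have ibp : ∫ z in (0:ℝ)..ℓ, φ z * deriv (deriv φ) z
      = φ ℓ * deriv φ ℓ - φ 0 * deriv φ 0 - ∫ z in (0:ℝ)..ℓ, deriv φ z * deriv φ z := by
    exact integral_mul_deriv_eq_deriv_mul
      (fun x _ => hd1.differentiableAt.hasDerivAt)
      (fun x _ => hd2.differentiableAt.hasDerivAt)
      (hcφ'.intervalIntegrable 0 ℓ) (hcφ''.intervalIntegrable 0 ℓ)
  -- rewrite the ODE inside the integral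
  have hae : ∀ᵐ x ∂(volume : Measure ℝ), x ≠ ℓ := by
    rw [ae_iff]
    simp only [not_not]
    simpa using Real.volume_singleton (x := ℓ)
  have hcong : ∫ z in (0:ℝ)..ℓ, φ z * deriv (deriv φ) z
      = ∫ z in (0:ℝ)..ℓ, (msq - lam) * (φ z)^2 := by
    apply intervalIntegral.integral_congr_ae
    filter_upwards [hae] with x hx hmem
    rw [uIoc_of_le hℓ.le] at hmem
    have hxI : x ∈ Ioo (0:ℝ) ℓ := ⟨hmem.1, lt_of_le_of_ne hmem.2 hx⟩
    have h := hODE x hxI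
    linear_combination (-(φ x)) * h
  have hsq : ∫ z in (0:ℝ)..ℓ, deriv φ z * deriv φ z = I1 := by
    rw [hI1def]; apply intervalIntegral.integral_congr; intro x _; ring
  have hconst : ∫ z in (0:ℝ)..ℓ, (msq - lam) * (φ z)^2 = (msq - lam) * I2 := by
    rw [hI2def]; exact intervalIntegral.integral_const_mul _ _
  have key : lam * I2 = I1 + msq * I2 - φ ℓ * deriv φ ℓ := by
    have := ibp
    rw [hcong, hconst, hsq, h0] at this
    linarith
  -- positivity of the integrals
  obtain ⟨z, hzI, hz⟩ := hne
  have hI2pos : 0 < I2 := by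
    apply my_integral_pos hℓ (hcφ.pow 2) (fun x => sq_nonneg _) hzI
    exact sq_pos_of_ne_zero hz
  have hzpos : 0 < z := by
    rcases eq_or_lt_of_le hzI.1 with h | h
    · rw [← h] at hz; exact absurd h0 hz
    · exact h
  obtain ⟨c, hcI, hcd⟩ := exists_hasDerivAt_eq_slope φ (deriv φ) hzpos
    (hcφ.continuousOn) (fun x _ => hd1.differentiableAt.hasDerivAt)
  have hcd' : deriv φ c ≠ 0 := by
    rw [hcd, h0, sub_zero, sub_zero]
    intro hcontra
    rcases div_eq_zero_iff.mp hcontra with h | h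
    · exact hz h
    · exact hzpos.ne' h
  have hI1pos : 0 < I1 := by
    apply my_integral_pos hℓ (hcφ'.pow 2) (fun x => sq_nonneg _)
      ⟨hcI.1.le, le_trans hcI.2.le hzI.2⟩
    exact sq_pos_of_ne_zero hcd'
  -- boundary algebra
  have hQ : lam * (β₁' * φ ℓ - β₂' * deriv φ ℓ)^2
      = -(β₁ * φ ℓ - β₂ * deriv φ ℓ) * (β₁' * φ ℓ - β₂' * deriv φ ℓ) := by
    linear_combination (-(β₁' * φ ℓ - β₂' * deriv φ ℓ)) * hbc
  have main : lam * ((β₁' * β₂ - β₁ * β₂') * I2 + (β₁' * φ ℓ - β₂' * deriv φ ℓ)^2)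
      = (β₁' * β₂ - β₁ * β₂') * I1 + (β₁' * β₂ - β₁ * β₂') * msq * I2
        + (-(β₁*β₁') * (φ ℓ)^2 + 2*β₁*β₂' * φ ℓ * deriv φ ℓ - β₂*β₂' * (deriv φ ℓ)^2) := by
    linear_combination (β₁' * β₂ - β₁ * β₂') * key + hQ
  have hQnn : 0 ≤ -(β₁*β₁') * (φ ℓ)^2 + 2*β₁*β₂' * φ ℓ * deriv φ ℓ - β₂*β₂' * (deriv φ ℓ)^2 := by
    nlinarith [sq_nonneg (β₂*β₂'*deriv φ ℓ - β₁*β₂'*φ ℓ),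
      mul_nonneg (mul_nonneg (mul_nonneg hβ₁ hβ₂'.le) hρ.le) (sq_nonneg (φ ℓ)),
      mul_pos (neg_pos.mpr hβ₂) hβ₂']
  have hA : 0 < (β₁' * β₂ - β₁ * β₂') * I2 + (β₁' * φ ℓ - β₂' * deriv φ ℓ)^2 := by
    have := mul_pos hρ hI2pos
    nlinarith [sq_nonneg (β₁' * φ ℓ - β₂' * deriv φ ℓ)]
  have hB : 0 < (β₁' * β₂ - β₁ * β₂') * I1 + (β₁' * β₂ - β₁ * β₂') * msq * I2
      + (-(β₁*β₁') * (φ ℓ)^2 + 2*β₁*β₂' * φ ℓ * deriv φ ℓ - β₂*β₂' * (deriv φ ℓ)^2) := by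
    have h1 := mul_pos hρ hI1pos
    have h2 : 0 ≤ (β₁' * β₂ - β₁ * β₂') * msq * I2 :=
      mul_nonneg (mul_nonneg hρ.le hmsq) hI2pos.le
    linarith
  by_contra hcon
  push_neg at hcon
  have : lam * ((β₁' * β₂ - β₁ * β₂') * I2 + (β₁' * φ ℓ - β₂' * deriv φ ℓ)^2) ≤ 0 :=
    mul_nonpos_of_nonpos_of_nonneg hcon hA.le
  linarith
end
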